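/- arXiv:1107.2629 — 8 statements merged into one kernel-verified Lean document; each statement's English description precedes it below -/
import Mathlib

section
/- For every family A : ℤ → B(H₁) of bounded operators with C := sup_n ‖A n‖ < ∞ there exists a unique bounded operator T_A on H₁ ⊗ H₂ such that T_A(ξ ⊗ (E n)η) = (A n ξ) ⊗ ((E n)η) for all n ∈ ℤ, ξ ∈ H₁, η ∈ H₂, and ‖T_A‖ ≤ C. Moreover, for two such uniformly bounded families A and B one has T_A ∘ T_B = T_{A·B}, where (A·B) n := (A n) ∘ (B n). -/
noncomputable section

/-- The completed Hilbert space tensor product of two complex Hilbert spaces,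
realized abstractly: a Hilbert space `HT` together with a continuous bilinear
map `tmul` whose elementary tensors have dense span and multiply inner
products, and the induced operator `map a b = a ⊗ b` on `HT`, determined by
`(a ⊗ b)(ξ ⊗ η) = (a ξ) ⊗ (b η)`. -/
structure HilbertTensor (H₁ H₂ HT : Type*)
    [NormedAddCommGroup H₁] [InnerProductSpace ℂ H₁] [CompleteSpace H₁]
    [NormedAddCommGroup H₂] [InnerProductSpace ℂ H₂] [CompleteSpace H₂]
    [NormedAddCommGroup HT] [InnerProductSpace ℂ HT] [CompleteSpace HT] :
    Type _ where
  tmul : H₁ →L[ℂ] H₂ →L[ℂ] HT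
  inner_tmul : ∀ (ξ ξ' : H₁) (η η' : H₂),
    (inner ℂ (tmul ξ η) (tmul ξ' η') : ℂ) = (inner ℂ ξ ξ' : ℂ) * (inner ℂ η η' : ℂ)
  dense_span : Dense (↑(Submodule.span ℂ {z : HT | ∃ ξ η, z = tmul ξ η}) : Set HT)
  map : (H₁ →L[ℂ] H₁) → (H₂ →L[ℂ] H₂) → (HT →L[ℂ] HT)
  map_tmul : ∀ (a : H₁ →L[ℂ] H₁) (b : H₂ →L[ℂ] H₂) (ξ : H₁) (η : H₂),
    map a b (tmul ξ η) = tmul (a ξ) (b η)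

/-- The von Neumann algebra generated by a set of operators: its double commutant. -/
def genVN {M : Type*} [Mul M] (S : Set M) : Set M :=
  Set.centralizer (Set.centralizer S)

/-- `adExp a z = e^{a} z e^{-a}`, i.e. `Ad(e^a)(z)`. -/
def adExp {A : Type*} [NormedRing A] [NormedAlgebra ℂ A] [CompleteSpace A]
    (a z : A) : A :=
  NormedSpace.exp a * z * NormedSpace.exp (-a)

namespace HilbertTensor

variable {H₁ H₂ HT : Type*}
    [NormedAddCommGroup H₁] [InnerProductSpace ℂ H₁] [CompleteSpace H₁]
    [NormedAddCommGroup H₂] [InnerProductSpace ℂ H₂] [CompleteSpace H₂]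
    [NormedAddCommGroup HT] [InnerProductSpace ℂ HT] [CompleteSpace HT]
    (P : HilbertTensor H₁ H₂ HT)

theorem ext' {F : Type*} [NormedAddCommGroup F] [NormedSpace ℂ F] {f g : HT →L[ℂ] F}
    (h : ∀ ξ η, f (P.tmul ξ η) = g (P.tmul ξ η)) : f = g := by
  have h1 : Set.EqOn f g {z : HT | ∃ ξ η, z = P.tmul ξ η} := by
    rintro z ⟨ξ, η, rfl⟩; exact h ξ η
  have h2 : Set.EqOn f g (↑(Submodule.span ℂ {z : HT | ∃ ξ η, z = P.tmul ξ η}) : Set HT) :=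
    fun x hx => LinearMap.eqOn_span h1 hx
  have := Continuous.ext_on P.dense_span f.continuous g.continuous h2
  ext x; exact congrFun this x

theorem map_comp (a a' : H₁ →L[ℂ] H₁) (b b' : H₂ →L[ℂ] H₂) :
    P.map a b ∘L P.map a' b' = P.map (a ∘L a') (b ∘L b') :=
  P.ext' fun ξ η => by simp [P.map_tmul]

theorem map_one : P.map 1 1 = ContinuousLinearMap.id ℂ HT :=
  P.ext' fun ξ η => by simp [P.map_tmul]

open ContinuousLinearMap in
theorem adjoint_map (a : H₁ →L[ℂ] H₁) (b : H₂ →L[ℂ] H₂) :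
    adjoint (P.map a b) = P.map (adjoint a) (adjoint b) := by
  symm
  rw [eq_adjoint_iff]
  have key : ∀ (ξ : H₁) (η : H₂) (x : HT),
      (inner ℂ (P.map a b (P.tmul ξ η)) x : ℂ) = inner ℂ (P.tmul ξ η) (P.map (adjoint a) (adjoint b) x) := by
    intro ξ η
    have : innerSL ℂ (P.map a b (P.tmul ξ η))
        = (innerSL ℂ (P.tmul ξ η)).comp (P.map (adjoint a) (adjoint b)) :=
      P.ext' fun ξ' η' => by
        simp only [innerSL_apply_apply, ContinuousLinearMap.comp_apply, P.map_tmul, P.inner_tmul,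
          adjoint_inner_right]
    exact fun x => DFunLike.congr_fun this x
  intro x y
  have : innerSL ℂ (P.map (adjoint a) (adjoint b) x) = (innerSL ℂ x).comp (P.map a b) :=
    P.ext' fun ξ η => by
      have := key ξ η x
      simp only [innerSL_apply_apply, ContinuousLinearMap.comp_apply]
      calc (inner ℂ (P.map (adjoint a) (adjoint b) x) (P.tmul ξ η) : ℂ)
          = starRingEnd ℂ (inner ℂ (P.tmul ξ η) (P.map (adjoint a) (adjoint b) x)) := by
            rw [inner_conj_symm]
        _ = starRingEnd ℂ (inner ℂ (P.map a b (P.tmul ξ η)) x) := by rw [this]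
        _ = inner ℂ x (P.map a b (P.tmul ξ η)) := by rw [inner_conj_symm]
  exact DFunLike.congr_fun this y

end HilbertTensor

namespace HilbertTensor
set_option maxHeartbeats 1000000
set_option synthInstance.maxHeartbeats 1000000

variable {H₁ H₂ HT : Type*}
    [NormedAddCommGroup H₁] [InnerProductSpace ℂ H₁] [CompleteSpace H₁]
    [NormedAddCommGroup H₂] [InnerProductSpace ℂ H₂] [CompleteSpace H₂]
    [NormedAddCommGroup HT] [InnerProductSpace ℂ HT] [CompleteSpace HT]
    (P : HilbertTensor H₁ H₂ HT)

open ContinuousLinearMap in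
theorem norm_sq_map_one (e : H₁ →L[ℂ] H₁) (z : HT) :
    ‖P.map e 1 z‖ ^ 2 = RCLike.re (inner ℂ z (P.map (adjoint e ∘L e) 1 z) : ℂ) := by
  have h1 : (inner ℂ (P.map e 1 z) (P.map e 1 z) : ℂ)
      = inner ℂ z (P.map (adjoint e ∘L e) 1 z) := by
    rw [← adjoint_inner_right (P.map e 1)]
    congr 1
    rw [← ContinuousLinearMap.comp_apply, P.adjoint_map, P.map_comp,
      ← star_eq_adjoint (1 : H₂ →L[ℂ] H₂), star_one, ContinuousLinearMap.one_def,
      ContinuousLinearMap.id_comp]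
  rw [← h1, inner_self_eq_norm_sq]

open ContinuousLinearMap in
theorem norm_map_one_le (e : H₁ →L[ℂ] H₁) (c : ℝ) (hc : ‖e‖ ≤ c) (z : HT) :
    ‖P.map e 1 z‖ ≤ c * ‖z‖ := by
  have hc0 : 0 ≤ c := le_trans (norm_nonneg e) hc
  set r : H₁ →L[ℂ] H₁ := ((c : ℂ) ^ 2) • 1 - adjoint e ∘L e with hr
  have hrsa : IsSelfAdjoint r := by
    rw [IsSelfAdjoint, star_sub, star_smul, star_one, star_eq_adjoint, adjoint_comp,
      adjoint_adjoint]
    congr 1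
    simp [Complex.star_def, ← Complex.ofReal_pow, Complex.conj_ofReal]
  have hrpos : 0 ≤ r := by
    rw [nonneg_iff_isPositive]
    refine ⟨hrsa.isSymmetric, fun x => ?_⟩
    rw [reApplyInnerSelf_apply]
    have hx : r x = (c : ℂ) ^ 2 • x - adjoint e (e x) := by simp [hr]
    rw [hx, inner_sub_left, inner_smul_left, adjoint_inner_left]
    have h1 : ‖e x‖ ≤ c * ‖x‖ :=
      le_trans (e.le_opNorm x) (mul_le_mul_of_nonneg_right hc (norm_nonneg x))
    have hax : ‖e x‖ ^ 2 ≤ c ^ 2 * ‖x‖ ^ 2 := by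
      calc ‖e x‖ ^ 2 ≤ (c * ‖x‖) ^ 2 := pow_le_pow_left₀ (norm_nonneg _) h1 2
        _ = c ^ 2 * ‖x‖ ^ 2 := by ring
    simp only [map_sub, inner_self_eq_norm_sq_to_K, inner_self_eq_norm_sq,
      ← Complex.ofReal_pow, Complex.conj_ofReal, ← Complex.ofReal_mul,
      RCLike.re_to_complex, Complex.ofReal_re]
    norm_cast
    simp only [Complex.coe_algebraMap, ← Complex.ofReal_mul, Complex.ofReal_re]
    linarith
  set s := CFC.sqrt r with hsdef
  have hssa : IsSelfAdjoint s := (CFC.sqrt_nonneg (a := r)).isSelfAdjoint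
  have hss : adjoint s ∘L s = r := by
    have hadj : ContinuousLinearMap.adjoint s = s := by
      rw [← star_eq_adjoint]; exact hssa.star_eq
    rw [hadj, ← ContinuousLinearMap.mul_def, ← pow_two]
    exact CFC.sq_sqrt r hrpos
  have hsum : P.map (adjoint e ∘L e) 1 + P.map r 1
      = ((c : ℂ) ^ 2) • ContinuousLinearMap.id ℂ HT := by
    apply P.ext'
    intro ξ η
    simp only [ContinuousLinearMap.add_apply, P.map_tmul, ContinuousLinearMap.smul_apply,
      ContinuousLinearMap.id_apply, ContinuousLinearMap.one_apply]
    have hξ : (adjoint e ∘L e) ξ + r ξ = ((c:ℂ)^2) • ξ := by simp [hr]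
    calc P.tmul ((adjoint e ∘L e) ξ) η + P.tmul (r ξ) η
        = P.tmul ((adjoint e ∘L e) ξ + r ξ) η := by rw [map_add, ContinuousLinearMap.add_apply]
      _ = P.tmul (((c:ℂ)^2) • ξ) η := by rw [hξ]
      _ = ((c:ℂ)^2) • P.tmul ξ η := by rw [map_smul, ContinuousLinearMap.smul_apply]
  have key : ‖P.map e 1 z‖ ^ 2 + ‖P.map s 1 z‖ ^ 2 = c ^ 2 * ‖z‖ ^ 2 := by
    rw [P.norm_sq_map_one e z, P.norm_sq_map_one s z, hss, ← map_add, ← inner_add_right]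
    have : P.map (adjoint e ∘L e) 1 z + P.map r 1 z = ((c:ℂ)^2) • z := by
      rw [← ContinuousLinearMap.add_apply, hsum]; rfl
    rw [this, inner_smul_right, inner_self_eq_norm_sq_to_K]
    simp [← Complex.ofReal_pow, ← Complex.ofReal_mul, RCLike.re_to_complex]
  have hle : ‖P.map e 1 z‖ ^ 2 ≤ (c * ‖z‖) ^ 2 := by nlinarith [sq_nonneg ‖P.map s 1 z‖]
  calc ‖P.map e 1 z‖ = Real.sqrt (‖P.map e 1 z‖ ^ 2) := by rw [Real.sqrt_sq (norm_nonneg _)]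
    _ ≤ Real.sqrt ((c * ‖z‖) ^ 2) := Real.sqrt_le_sqrt hle
    _ = c * ‖z‖ := Real.sqrt_sq (mul_nonneg hc0 (norm_nonneg _))

end HilbertTensor

theorem orth_norm_sum_sq {G : Type*} [NormedAddCommGroup G] [InnerProductSpace ℂ G]
    (u : ℤ → G) (h : ∀ m n, m ≠ n → (inner ℂ (u m) (u n) : ℂ) = 0) (t : Finset ℤ) :
    ‖∑ n ∈ t, u n‖ ^ 2 = ∑ n ∈ t, ‖u n‖ ^ 2 := by
  have h1 : (inner ℂ (∑ n ∈ t, u n) (∑ n ∈ t, u n) : ℂ) = ∑ n ∈ t, inner ℂ (u n) (u n) := by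
    rw [sum_inner]
    refine Finset.sum_congr rfl fun m hm => ?_
    rw [inner_sum]
    exact Finset.sum_eq_single_of_mem m hm fun n hn hne => h m n (Ne.symm hne)
  have h2 := congrArg (fun z : ℂ => RCLike.re z) h1
  simp only [map_sum, inner_self_eq_norm_sq] at h2
  exact h2

theorem summable_of_orth {G : Type*} [NormedAddCommGroup G] [InnerProductSpace ℂ G]
    [CompleteSpace G] (u : ℤ → G) (h : ∀ m n, m ≠ n → (inner ℂ (u m) (u n) : ℂ) = 0)
    (hsq : Summable fun n => ‖u n‖ ^ 2) : Summable u := by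
  rw [summable_iff_vanishing]
  intro e he
  obtain ⟨ε, hε, hball⟩ := Metric.mem_nhds_iff.mp he
  obtain ⟨s, hs⟩ := (summable_iff_vanishing.mp hsq) (Metric.ball 0 (ε ^ 2))
    (Metric.ball_mem_nhds _ (by positivity))
  refine ⟨s, fun t ht => ?_⟩
  apply hball
  rw [Metric.mem_ball, dist_zero_right]
  have h1 := hs t ht
  rw [Metric.mem_ball, dist_zero_right, Real.norm_eq_abs] at h1
  have h2 : ‖∑ n ∈ t, u n‖ ^ 2 < ε ^ 2 := by
    rw [orth_norm_sum_sq u h t]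
    exact lt_of_le_of_lt (le_abs_self _) h1
  nlinarith [norm_nonneg (∑ n ∈ t, u n)]

set_option maxHeartbeats 2000000
set_option synthInstance.maxHeartbeats 1000000

open ContinuousLinearMap in
theorem stmt1'
    {H₁ H₂ HT : Type*}
    [NormedAddCommGroup H₁] [InnerProductSpace ℂ H₁] [CompleteSpace H₁]
    [NormedAddCommGroup H₂] [InnerProductSpace ℂ H₂] [CompleteSpace H₂]
    [NormedAddCommGroup HT] [InnerProductSpace ℂ HT] [CompleteSpace HT]
    (P : HilbertTensor H₁ H₂ HT)
    (E : ℤ → (H₂ →L[ℂ] H₂))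
    (hE_idem : ∀ n, IsIdempotentElem (E n))
    (hE_sa : ∀ n, IsSelfAdjoint (E n))
    (hE_orth : ∀ m n, m ≠ n → E m * E n = 0)
    (hE_sum : ∀ η : H₂, HasSum (fun n => E n η) η) :
    (∀ (A : ℤ → (H₁ →L[ℂ] H₁)) (C : ℝ), (∀ n, ‖A n‖ ≤ C) →
      (∃! T : HT →L[ℂ] HT, ∀ (n : ℤ) (ξ : H₁) (η : H₂),
        T (P.tmul ξ (E n η)) = P.tmul (A n ξ) (E n η)) ∧
      (∀ T : HT →L[ℂ] HT,
        (∀ (n : ℤ) (ξ : H₁) (η : H₂),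
          T (P.tmul ξ (E n η)) = P.tmul (A n ξ) (E n η)) → ‖T‖ ≤ C)) ∧
    (∀ (A B : ℤ → (H₁ →L[ℂ] H₁)) (CA CB : ℝ),
      (∀ n, ‖A n‖ ≤ CA) → (∀ n, ‖B n‖ ≤ CB) →
      ∀ (TA TB TAB : HT →L[ℂ] HT),
        (∀ (n : ℤ) (ξ : H₁) (η : H₂),
          TA (P.tmul ξ (E n η)) = P.tmul (A n ξ) (E n η)) →
        (∀ (n : ℤ) (ξ : H₁) (η : H₂),
          TB (P.tmul ξ (E n η)) = P.tmul (B n ξ) (E n η)) →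
        (∀ (n : ℤ) (ξ : H₁) (η : H₂),
          TAB (P.tmul ξ (E n η)) = P.tmul ((A n ∘L B n) ξ) (E n η)) →
        TA ∘L TB = TAB) := by
  -- two continuous linear maps agreeing on ξ ⊗ Eₙη are equal
  have haux : ∀ T T' : HT →L[ℂ] HT,
      (∀ (n : ℤ) (ξ : H₁) (η : H₂), T (P.tmul ξ (E n η)) = T' (P.tmul ξ (E n η))) → T = T' := by
    intro T T' h
    apply P.ext'
    intro ξ η
    have hη : HasSum (fun n => P.tmul ξ (E n η)) (P.tmul ξ η) :=
      (P.tmul ξ).hasSum (hE_sum η)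
    have h1 : HasSum (fun n => T (P.tmul ξ (E n η))) (T (P.tmul ξ η)) := T.hasSum hη
    have h2 : HasSum (fun n => T (P.tmul ξ (E n η))) (T' (P.tmul ξ η)) := by
      have h3 : HasSum (fun n => T' (P.tmul ξ (E n η))) (T' (P.tmul ξ η)) := T'.hasSum hη
      simpa only [← h] using h3
    exact h1.unique h2
  -- the projections F n = 1 ⊗ E n on HT
  set F : ℤ → (HT →L[ℂ] HT) := fun n => P.map (1 : H₁ →L[ℂ] H₁) (E n) with hF
  have h11 : (1 : H₁ →L[ℂ] H₁) ∘L (1 : H₁ →L[ℂ] H₁) = 1 := by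
    rw [ContinuousLinearMap.one_def, ContinuousLinearMap.id_comp]
  have hFmul : ∀ m n, F m ∘L F n = P.map 1 (E m * E n) := by
    intro m n
    rw [hF, P.map_comp, h11, ContinuousLinearMap.mul_def]
  have hmap10 : P.map 1 (0 : H₂ →L[ℂ] H₂) = 0 := by
    apply P.ext'
    intro ξ η
    simp [P.map_tmul]
  have hF0 : ∀ m n, m ≠ n → F m ∘L F n = 0 := by
    intro m n hmn
    rw [hFmul, hE_orth m n hmn, hmap10]
  have hFidem : ∀ n, F n ∘L F n = F n := by
    intro n
    rw [hFmul, hE_idem n]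
  have hFsa : ∀ n, adjoint (F n) = F n := by
    intro n
    rw [hF, P.adjoint_map, ← star_eq_adjoint (1 : H₁ →L[ℂ] H₁), star_one,
      ← star_eq_adjoint (E n), (hE_sa n).star_eq]
  -- partial sums of the projections F n
  have hQle : ∀ (t : Finset ℤ) (x : HT), ∑ n ∈ t, ‖F n x‖ ^ 2 ≤ ‖x‖ ^ 2 := by
    intro t x
    set Q : HT →L[ℂ] HT := ∑ n ∈ t, F n with hQ
    have hQsa : adjoint Q = Q := by
      rw [← star_eq_adjoint, hQ, star_sum]
      exact Finset.sum_congr rfl fun n _ => by rw [star_eq_adjoint, hFsa n]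
    have hQQ : Q ∘L Q = Q := by
      rw [← ContinuousLinearMap.mul_def, hQ, Finset.sum_mul_sum]
      refine Finset.sum_congr rfl fun m hm => ?_
      rw [Finset.sum_eq_single_of_mem m hm
        (fun n hn hne => by rw [ContinuousLinearMap.mul_def]; exact hF0 m n (Ne.symm hne)),
        ContinuousLinearMap.mul_def, hFidem m]
    have hQx : ∀ y : HT, (inner ℂ (Q y) (Q y) : ℂ) = inner ℂ y (Q y) := by
      intro y
      have h1 := adjoint_inner_right Q y (Q y)
      rw [hQsa, ← ContinuousLinearMap.comp_apply, hQQ] at h1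
      exact h1.symm
    have hQnorm : ∀ y : HT, ‖Q y‖ ≤ ‖y‖ := by
      intro y
      have h1 : ‖Q y‖ ^ 2 ≤ ‖y‖ * ‖Q y‖ := by
        rw [← inner_self_eq_norm_sq (𝕜 := ℂ), hQx y]
        exact re_inner_le_norm y (Q y)
      rcases eq_or_lt_of_le (norm_nonneg (Q y)) with h2 | h2
      · rw [← h2]; exact norm_nonneg y
      · nlinarith
    have hterm : ∀ n, ‖F n x‖ ^ 2 = RCLike.re (inner ℂ x (F n x) : ℂ) := by
      intro n
      rw [← inner_self_eq_norm_sq (𝕜 := ℂ)]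
      congr 1
      have h1 := adjoint_inner_right (F n) x (F n x)
      rw [hFsa, ← ContinuousLinearMap.comp_apply, hFidem n] at h1
      exact h1.symm
    calc ∑ n ∈ t, ‖F n x‖ ^ 2 = RCLike.re (inner ℂ x (Q x) : ℂ) := by
          rw [hQ]
          simp only [hterm]
          rw [← map_sum, ← inner_sum]
          congr 2
          rw [ContinuousLinearMap.sum_apply]
      _ ≤ ‖x‖ * ‖Q x‖ := re_inner_le_norm x (Q x)
      _ ≤ ‖x‖ * ‖x‖ := mul_le_mul_of_nonneg_left (hQnorm x) (norm_nonneg x)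
      _ = ‖x‖ ^ 2 := by ring
  have hone_comp : ∀ a : H₁ →L[ℂ] H₁, (1 : H₁ →L[ℂ] H₁) ∘L a = a := by
    intro a; rw [ContinuousLinearMap.one_def, ContinuousLinearMap.id_comp]
  have hcomp_one : ∀ a : H₁ →L[ℂ] H₁, a ∘L (1 : H₁ →L[ℂ] H₁) = a := by
    intro a; rw [ContinuousLinearMap.one_def, ContinuousLinearMap.comp_id]
  have hone_comp₂ : ∀ b : H₂ →L[ℂ] H₂, (1 : H₂ →L[ℂ] H₂) ∘L b = b := by
    intro b; rw [ContinuousLinearMap.one_def, ContinuousLinearMap.id_comp]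
  have hcomp_one₂ : ∀ b : H₂ →L[ℂ] H₂, b ∘L (1 : H₂ →L[ℂ] H₂) = b := by
    intro b; rw [ContinuousLinearMap.one_def, ContinuousLinearMap.comp_id]
  have hsplit : ∀ (a : H₁ →L[ℂ] H₁) (n : ℤ), P.map a (E n) = F n ∘L P.map a 1 := by
    intro a n
    rw [hF, P.map_comp, hone_comp a, hcomp_one₂ (E n)]
  have hsplit' : ∀ (a : H₁ →L[ℂ] H₁) (n : ℤ), P.map a (E n) = P.map a 1 ∘L F n := by
    intro a n
    rw [hF, P.map_comp, hcomp_one a, hone_comp₂ (E n)]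
  have horthG : ∀ (A : ℤ → (H₁ →L[ℂ] H₁)) (x : HT) (m n : ℤ), m ≠ n →
      (inner ℂ (P.map (A m) (E m) x) (P.map (A n) (E n) x) : ℂ) = 0 := by
    intro A x m n hmn
    rw [hsplit (A m) m, hsplit (A n) n]
    simp only [ContinuousLinearMap.comp_apply]
    rw [← hFsa m, adjoint_inner_left, ← ContinuousLinearMap.comp_apply, hF0 m n hmn]
    simp
  have hGsq : ∀ (A : ℤ → (H₁ →L[ℂ] H₁)) (C : ℝ), (∀ n, ‖A n‖ ≤ C) → ∀ (x : HT) (t : Finset ℤ),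
      ∑ n ∈ t, ‖P.map (A n) (E n) x‖ ^ 2 ≤ C ^ 2 * ‖x‖ ^ 2 := by
    intro A C hC x t
    calc ∑ n ∈ t, ‖P.map (A n) (E n) x‖ ^ 2
        ≤ ∑ n ∈ t, C ^ 2 * ‖F n x‖ ^ 2 := by
          refine Finset.sum_le_sum fun n _ => ?_
          have h1 : ‖P.map (A n) (E n) x‖ ≤ C * ‖F n x‖ := by
            rw [hsplit' (A n) n, ContinuousLinearMap.comp_apply]
            exact P.norm_map_one_le (A n) C (hC n) (F n x)
          calc ‖P.map (A n) (E n) x‖ ^ 2 ≤ (C * ‖F n x‖) ^ 2 :=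
                pow_le_pow_left₀ (norm_nonneg _) h1 2
            _ = C ^ 2 * ‖F n x‖ ^ 2 := by ring
      _ = C ^ 2 * ∑ n ∈ t, ‖F n x‖ ^ 2 := by rw [Finset.mul_sum]
      _ ≤ C ^ 2 * ‖x‖ ^ 2 := mul_le_mul_of_nonneg_left (hQle t x) (sq_nonneg C)
  refine ⟨?_, ?_⟩
  · intro A C hC
    have hC0 : 0 ≤ C := le_trans (norm_nonneg (A 0)) (hC 0)
    have hsummable : ∀ x : HT, Summable fun n => P.map (A n) (E n) x := by
      intro x
      refine summable_of_orth _ (fun m n hmn => horthG A x m n hmn)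
        (summable_of_sum_le (fun n => sq_nonneg _) (fun t => hGsq A C hC x t))
    set Tlin : HT →ₗ[ℂ] HT :=
      { toFun := fun x => ∑' n, P.map (A n) (E n) x
        map_add' := by
          intro x y
          rw [← Summable.tsum_add (hsummable x) (hsummable y)]
          exact tsum_congr fun n => map_add _ x y
        map_smul' := by
          intro c x
          simp only [RingHom.id_apply]
          rw [← Summable.tsum_const_smul c (hsummable x)]
          exact tsum_congr fun n => map_smul _ c x } with hTlin
    have hbound : ∀ x, ‖Tlin x‖ ≤ C * ‖x‖ := by
      intro x
      have hhs := (hsummable x).hasSum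
      refine le_of_tendsto hhs.norm (Filter.Eventually.of_forall fun t => ?_)
      have h2 : ‖∑ n ∈ t, P.map (A n) (E n) x‖ ^ 2 ≤ (C * ‖x‖) ^ 2 := by
        rw [orth_norm_sum_sq _ (horthG A x) t]
        calc ∑ n ∈ t, ‖P.map (A n) (E n) x‖ ^ 2 ≤ C ^ 2 * ‖x‖ ^ 2 := hGsq A C hC x t
          _ = (C * ‖x‖) ^ 2 := by ring
      calc ‖∑ n ∈ t, P.map (A n) (E n) x‖
          = Real.sqrt (‖∑ n ∈ t, P.map (A n) (E n) x‖ ^ 2) :=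
            (Real.sqrt_sq (norm_nonneg _)).symm
        _ ≤ Real.sqrt ((C * ‖x‖) ^ 2) := Real.sqrt_le_sqrt h2
        _ = C * ‖x‖ := Real.sqrt_sq (mul_nonneg hC0 (norm_nonneg _))
    set T : HT →L[ℂ] HT := Tlin.mkContinuous C hbound with hT
    have hTapp : ∀ x, T x = ∑' n, P.map (A n) (E n) x := fun x => rfl
    have hTprop : ∀ (n : ℤ) (ξ : H₁) (η : H₂),
        T (P.tmul ξ (E n η)) = P.tmul (A n ξ) (E n η) := by
      intro k ξ η
      rw [hTapp]
      have hz : ∀ n, n ≠ k → P.map (A n) (E n) (P.tmul ξ (E k η)) = 0 := by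
        intro n hn
        rw [P.map_tmul, ← ContinuousLinearMap.mul_apply, hE_orth n k hn,
          ContinuousLinearMap.zero_apply, map_zero]
      rw [tsum_eq_single k hz, P.map_tmul, ← ContinuousLinearMap.mul_apply, hE_idem k]
    constructor
    · exact ⟨T, hTprop, fun T' hT' => haux T' T fun n ξ η => by rw [hT' n ξ η, hTprop n ξ η]⟩
    · intro T' hT'
      have hTT : T' = T := haux T' T fun n ξ η => by rw [hT' n ξ η, hTprop n ξ η]
      rw [hTT]
      exact ContinuousLinearMap.opNorm_le_bound T hC0 hbound
  · intro A B CA CB hA hB TA TB TAB hTA hTB hTAB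
    apply haux
    intro n ξ η
    rw [ContinuousLinearMap.comp_apply, hTB n ξ η, hTA n (B n ξ) η, hTAB n ξ η,
      ContinuousLinearMap.comp_apply]


/-- for a uniformly bounded family `A : ℤ → B(H₁)` there is a unique
bounded operator `T_A` on `H₁ ⊗ H₂` with `T_A(ξ ⊗ (E n)η) = (A n ξ) ⊗ ((E n)η)`,
its norm is at most `C = sup ‖A n‖`, and `T_A ∘ T_B = T_{A·B}`. -/
theorem stmt1
    {H₁ H₂ HT : Type*}
    [NormedAddCommGroup H₁] [InnerProductSpace ℂ H₁] [CompleteSpace H₁]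
    [NormedAddCommGroup H₂] [InnerProductSpace ℂ H₂] [CompleteSpace H₂]
    [NormedAddCommGroup HT] [InnerProductSpace ℂ HT] [CompleteSpace HT]
    (P : HilbertTensor H₁ H₂ HT)
    (E : ℤ → (H₂ →L[ℂ] H₂))
    (hE_idem : ∀ n, IsIdempotentElem (E n))
    (hE_sa : ∀ n, IsSelfAdjoint (E n))
    (hE_orth : ∀ m n, m ≠ n → E m * E n = 0)
    (hE_sum : ∀ η : H₂, HasSum (fun n => E n η) η) :
    (∀ (A : ℤ → (H₁ →L[ℂ] H₁)) (C : ℝ), (∀ n, ‖A n‖ ≤ C) →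
      (∃! T : HT →L[ℂ] HT, ∀ (n : ℤ) (ξ : H₁) (η : H₂),
        T (P.tmul ξ (E n η)) = P.tmul (A n ξ) (E n η)) ∧
      (∀ T : HT →L[ℂ] HT,
        (∀ (n : ℤ) (ξ : H₁) (η : H₂),
          T (P.tmul ξ (E n η)) = P.tmul (A n ξ) (E n η)) → ‖T‖ ≤ C)) ∧
    (∀ (A B : ℤ → (H₁ →L[ℂ] H₁)) (CA CB : ℝ),
      (∀ n, ‖A n‖ ≤ CA) → (∀ n, ‖B n‖ ≤ CB) →
      ∀ (TA TB TAB : HT →L[ℂ] HT),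
        (∀ (n : ℤ) (ξ : H₁) (η : H₂),
          TA (P.tmul ξ (E n η)) = P.tmul (A n ξ) (E n η)) →
        (∀ (n : ℤ) (ξ : H₁) (η : H₂),
          TB (P.tmul ξ (E n η)) = P.tmul (B n ξ) (E n η)) →
        (∀ (n : ℤ) (ξ : H₁) (η : H₂),
          TAB (P.tmul ξ (E n η)) = P.tmul ((A n ∘L B n) ξ) (E n η)) →
        TA ∘L TB = TAB) := by
  exact stmt1' P E hE_idem hE_sa hE_orth hE_sum
end
end

section
/- Let x, x' be bounded operators on H. If x commutes with V(κ s) x' V(κ s)* for every s ∈ ℤ with E s ≠ 0, then x ⊗ 1 commutes with U_κ (x' ⊗ 1) U_κ*, and 1 ⊗ x commutes with U_κ (1 ⊗ x') U_κ*. -/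
noncomputable section

/-- if `x` commutes with `V(κs) x' V(κs)*` for every `s ∈ ℤ` with
`E s ≠ 0`, then `x ⊗ 1` commutes with `U_κ (x' ⊗ 1) U_κ*` and `1 ⊗ x` commutes
with `U_κ (1 ⊗ x') U_κ*`. -/
theorem stmt3
    {H HT : Type*}
    [NormedAddCommGroup H] [InnerProductSpace ℂ H] [CompleteSpace H]
    [NormedAddCommGroup HT] [InnerProductSpace ℂ HT] [CompleteSpace HT]
    (P : HilbertTensor H H HT)
    (E : ℤ → (H →L[ℂ] H))
    (hE_idem : ∀ n, IsIdempotentElem (E n))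
    (hE_sa : ∀ n, IsSelfAdjoint (E n))
    (hE_orth : ∀ m n, m ≠ n → E m * E n = 0)
    (hE_sum : ∀ ξ : H, HasSum (fun n => E n ξ) ξ)
    (V : ℝ → (H →L[ℂ] H))
    (hV_unitary : ∀ t, V t ∈ unitary (H →L[ℂ] H))
    (hV_eig : ∀ (t : ℝ) (n : ℤ) (ξ : H), ξ ∈ Set.range ⇑(E n) →
      V t ξ = Complex.exp (Complex.I * (n : ℂ) * (t : ℂ)) • ξ)
    (κ : ℝ) (U : HT →L[ℂ] HT)
    (hU_unitary : U ∈ unitary (HT →L[ℂ] HT))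
    (hU_eig : ∀ (m n : ℤ) (ξ η : H), ξ ∈ Set.range ⇑(E m) → η ∈ Set.range ⇑(E n) →
      U (P.tmul ξ η) = Complex.exp (Complex.I * (κ : ℂ) * (m : ℂ) * (n : ℂ)) • P.tmul ξ η)
    (x x' : H →L[ℂ] H)
    (hcomm : ∀ s : ℤ, E s ≠ 0 →
      Commute x (V (κ * (s : ℝ)) * x' * star (V (κ * (s : ℝ))))) :
    Commute (P.map x 1) (U * P.map x' 1 * star U) ∧
    Commute (P.map 1 x) (U * P.map 1 x' * star U) := by
  have hVV : ∀ t : ℝ, V t * star (V t) = 1 := fun t => (Unitary.mem_iff.mp (hV_unitary t)).2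
  have hUsU : star U * U = 1 := (Unitary.mem_iff.mp hU_unitary).1
  -- spectral expansion of V t
  have hV_sum : ∀ (t : ℝ) (ζ : H),
      HasSum (fun n : ℤ => Complex.exp (Complex.I * (n : ℂ) * (t : ℂ)) • E n ζ) (V t ζ) := by
    intro t ζ
    have h := (V t).hasSum (hE_sum ζ)
    have heq : ∀ n : ℤ, V t (E n ζ) = Complex.exp (Complex.I * (n : ℂ) * (t : ℂ)) • E n ζ :=
      fun n => hV_eig t n (E n ζ) ⟨ζ, rfl⟩
    simpa only [heq] using h
  -- U on tensors whose right slot is in range (E s)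
  have hU_left : ∀ (s : ℤ) (η : H), η ∈ Set.range ⇑(E s) → ∀ ζ : H,
      U (P.tmul ζ η) = P.tmul (V (κ * (s : ℝ)) ζ) η := by
    intro s η hη ζ
    have h1 : HasSum (fun m : ℤ => U (P.tmul (E m ζ) η)) (U (P.tmul ζ η)) := by
      have := U.hasSum ((P.tmul.flip η).hasSum (hE_sum ζ))
      simpa only [ContinuousLinearMap.flip_apply] using this
    have h3 := (P.tmul.flip η).hasSum (hV_sum (κ * (s : ℝ)) ζ)
    simp only [map_smul, ContinuousLinearMap.flip_apply] at h3
    have hterm : ∀ m : ℤ, U (P.tmul (E m ζ) η)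
        = Complex.exp (Complex.I * (m : ℂ) * ((κ * (s : ℝ) : ℝ) : ℂ)) • P.tmul (E m ζ) η := by
      intro m
      have hc : Complex.I * (κ : ℂ) * (m : ℂ) * (s : ℂ)
          = Complex.I * (m : ℂ) * ((κ * (s : ℝ) : ℝ) : ℂ) := by push_cast; ring
      rw [hU_eig m s (E m ζ) η ⟨ζ, rfl⟩ hη, hc]
    simp only [← hterm] at h3
    exact h1.unique h3
  -- U on tensors whose left slot is in range (E s)
  have hU_right : ∀ (s : ℤ) (ξ : H), ξ ∈ Set.range ⇑(E s) → ∀ ζ : H,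
      U (P.tmul ξ ζ) = P.tmul ξ (V (κ * (s : ℝ)) ζ) := by
    intro s ξ hξ ζ
    have h1 : HasSum (fun n : ℤ => U (P.tmul ξ (E n ζ))) (U (P.tmul ξ ζ)) :=
      U.hasSum ((P.tmul ξ).hasSum (hE_sum ζ))
    have h3 := (P.tmul ξ).hasSum (hV_sum (κ * (s : ℝ)) ζ)
    simp only [map_smul] at h3
    have hterm : ∀ n : ℤ, U (P.tmul ξ (E n ζ))
        = Complex.exp (Complex.I * (n : ℂ) * ((κ * (s : ℝ) : ℝ) : ℂ)) • P.tmul ξ (E n ζ) := by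
      intro n
      have hc : Complex.I * (κ : ℂ) * (s : ℂ) * (n : ℂ)
          = Complex.I * (n : ℂ) * ((κ * (s : ℝ) : ℝ) : ℂ) := by push_cast; ring
      rw [hU_eig s n ξ (E n ζ) hξ ⟨ζ, rfl⟩, hc]
    simp only [← hterm] at h3
    exact h1.unique h3
  -- star U on such tensors
  have hsU_left : ∀ (s : ℤ) (η : H), η ∈ Set.range ⇑(E s) → ∀ ζ : H,
      (star U) (P.tmul ζ η) = P.tmul ((star (V (κ * (s : ℝ)))) ζ) η := by
    intro s η hη ζ
    have h := hU_left s η hη ((star (V (κ * (s : ℝ)))) ζ)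
    rw [← ContinuousLinearMap.mul_apply, hVV, ContinuousLinearMap.one_apply] at h
    calc (star U) (P.tmul ζ η)
        = (star U) (U (P.tmul ((star (V (κ * (s : ℝ)))) ζ) η)) := by rw [h]
      _ = (star U * U) (P.tmul ((star (V (κ * (s : ℝ)))) ζ) η) := rfl
      _ = P.tmul ((star (V (κ * (s : ℝ)))) ζ) η := by
            rw [hUsU, ContinuousLinearMap.one_apply]
  have hsU_right : ∀ (s : ℤ) (ξ : H), ξ ∈ Set.range ⇑(E s) → ∀ ζ : H,
      (star U) (P.tmul ξ ζ) = P.tmul ξ ((star (V (κ * (s : ℝ)))) ζ) := by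
    intro s ξ hξ ζ
    have h := hU_right s ξ hξ ((star (V (κ * (s : ℝ)))) ζ)
    rw [← ContinuousLinearMap.mul_apply, hVV, ContinuousLinearMap.one_apply] at h
    calc (star U) (P.tmul ξ ζ)
        = (star U) (U (P.tmul ξ ((star (V (κ * (s : ℝ)))) ζ))) := by rw [h]
      _ = (star U * U) (P.tmul ξ ((star (V (κ * (s : ℝ)))) ζ)) := rfl
      _ = P.tmul ξ ((star (V (κ * (s : ℝ)))) ζ) := by
            rw [hUsU, ContinuousLinearMap.one_apply]
  -- conjugation formulas
  have hconj1 : ∀ (s : ℤ) (ξ η : H), η ∈ Set.range ⇑(E s) →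
      (U * P.map x' 1 * star U) (P.tmul ξ η)
        = P.tmul ((V (κ * (s : ℝ)) * x' * star (V (κ * (s : ℝ)))) ξ) η := by
    intro s ξ η hη
    simp only [ContinuousLinearMap.mul_apply]
    rw [hsU_left s η hη, P.map_tmul, ContinuousLinearMap.one_apply, hU_left s η hη]
  have hconj2 : ∀ (s : ℤ) (ξ η : H), ξ ∈ Set.range ⇑(E s) →
      (U * P.map 1 x' * star U) (P.tmul ξ η)
        = P.tmul ξ ((V (κ * (s : ℝ)) * x' * star (V (κ * (s : ℝ)))) η) := by
    intro s ξ η hξ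
    simp only [ContinuousLinearMap.mul_apply]
    rw [hsU_right s ξ hξ, P.map_tmul, ContinuousLinearMap.one_apply, hU_right s ξ hξ]
  constructor
  · show P.map x 1 * (U * P.map x' 1 * star U) = (U * P.map x' 1 * star U) * P.map x 1
    refine ContinuousLinearMap.ext_on P.dense_span ?_
    rintro z ⟨ξ, η, rfl⟩
    have heq : ∀ s : ℤ,
        (P.map x 1 * (U * P.map x' 1 * star U)) (P.tmul ξ (E s η))
          = ((U * P.map x' 1 * star U) * P.map x 1) (P.tmul ξ (E s η)) := by
      intro s
      by_cases hs : E s = 0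
      · simp [hs, ContinuousLinearMap.mul_apply]
      · have hη : E s η ∈ Set.range ⇑(E s) := ⟨η, rfl⟩
        have hW := (hcomm s hs).eq
        calc (P.map x 1 * (U * P.map x' 1 * star U)) (P.tmul ξ (E s η))
            = P.map x 1 ((U * P.map x' 1 * star U) (P.tmul ξ (E s η))) := rfl
          _ = P.map x 1 (P.tmul ((V (κ * (s : ℝ)) * x' * star (V (κ * (s : ℝ)))) ξ)
                (E s η)) := by rw [hconj1 s ξ (E s η) hη]
          _ = P.tmul (x ((V (κ * (s : ℝ)) * x' * star (V (κ * (s : ℝ)))) ξ))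
                ((1 : H →L[ℂ] H) (E s η)) := P.map_tmul _ _ _ _
          _ = P.tmul ((x * (V (κ * (s : ℝ)) * x' * star (V (κ * (s : ℝ))))) ξ) (E s η) := rfl
          _ = P.tmul (((V (κ * (s : ℝ)) * x' * star (V (κ * (s : ℝ)))) * x) ξ) (E s η) := by
                rw [hW]
          _ = (U * P.map x' 1 * star U) (P.tmul (x ξ) (E s η)) := by
                rw [hconj1 s (x ξ) (E s η) hη, ContinuousLinearMap.mul_apply]
          _ = ((U * P.map x' 1 * star U) * P.map x 1) (P.tmul ξ (E s η)) := by
                conv_rhs => rw [ContinuousLinearMap.mul_apply, P.map_tmul,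
                  ContinuousLinearMap.one_apply]
    have hL := (P.map x 1 * (U * P.map x' 1 * star U)).hasSum ((P.tmul ξ).hasSum (hE_sum η))
    have hR := ((U * P.map x' 1 * star U) * P.map x 1).hasSum ((P.tmul ξ).hasSum (hE_sum η))
    simp only [heq] at hL
    exact hL.unique hR
  · show P.map 1 x * (U * P.map 1 x' * star U) = (U * P.map 1 x' * star U) * P.map 1 x
    refine ContinuousLinearMap.ext_on P.dense_span ?_
    rintro z ⟨ξ, η, rfl⟩
    have heq : ∀ s : ℤ,
        (P.map 1 x * (U * P.map 1 x' * star U)) (P.tmul (E s ξ) η)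
          = ((U * P.map 1 x' * star U) * P.map 1 x) (P.tmul (E s ξ) η) := by
      intro s
      by_cases hs : E s = 0
      · simp [hs, ContinuousLinearMap.mul_apply]
      · have hξ : E s ξ ∈ Set.range ⇑(E s) := ⟨ξ, rfl⟩
        have hW := (hcomm s hs).eq
        calc (P.map 1 x * (U * P.map 1 x' * star U)) (P.tmul (E s ξ) η)
            = P.map 1 x ((U * P.map 1 x' * star U) (P.tmul (E s ξ) η)) := rfl
          _ = P.map 1 x (P.tmul (E s ξ)
                ((V (κ * (s : ℝ)) * x' * star (V (κ * (s : ℝ)))) η)) := by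
                rw [hconj2 s (E s ξ) η hξ]
          _ = P.tmul ((1 : H →L[ℂ] H) (E s ξ))
                (x ((V (κ * (s : ℝ)) * x' * star (V (κ * (s : ℝ)))) η)) := P.map_tmul _ _ _ _
          _ = P.tmul (E s ξ) ((x * (V (κ * (s : ℝ)) * x' * star (V (κ * (s : ℝ))))) η) := rfl
          _ = P.tmul (E s ξ) (((V (κ * (s : ℝ)) * x' * star (V (κ * (s : ℝ)))) * x) η) := by
                rw [hW]
          _ = (U * P.map 1 x' * star U) (P.tmul (E s ξ) (x η)) := by
                rw [hconj2 s (E s ξ) (x η) hξ, ContinuousLinearMap.mul_apply]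
          _ = ((U * P.map 1 x' * star U) * P.map 1 x) (P.tmul (E s ξ) η) := by
                conv_rhs => rw [ContinuousLinearMap.mul_apply, P.map_tmul,
                  ContinuousLinearMap.one_apply]
    have hL' := (P.map 1 x * (U * P.map 1 x' * star U)).hasSum
      ((P.tmul.flip η).hasSum (hE_sum ξ))
    have hR' := ((U * P.map 1 x' * star U) * P.map 1 x).hasSum
      ((P.tmul.flip η).hasSum (hE_sum ξ))
    simp only [ContinuousLinearMap.flip_apply] at hL' hR'
    simp only [heq] at hL'
    exact hL'.unique hR'
end
end

section
/- Suppose Ω ∈ H satisfies Q Ω = 0. Then for all bounded operators x, y on H one has (x ⊗ 1) · (e^{i κ Q⊗Q} (1 ⊗ y) e^{-i κ Q⊗Q}) · (Ω ⊗ Ω) = (x Ω) ⊗ (y Ω). Consequently, if M₋ and M₊ are von Neumann algebras on H such that Ω ⊗ Ω is cyclic for the von Neumann algebra generated by {x ⊗ 1 : x ∈ M₋} ∪ {1 ⊗ y : y ∈ M₊}, then Ω ⊗ Ω is cyclic for the von Neumann algebra M_{Q,κ} generated by {x ⊗ 1 : x ∈ M₋} ∪ {e^{i κ Q⊗Q}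 (1 ⊗ y) e^{-i κ Q⊗Q} : y ∈ M₊}. -/
noncomputable section

open scoped InnerProductSpace

section Aux

variable {E : Type*} [NormedAddCommGroup E] [InnerProductSpace ℂ E] [CompleteSpace E]

/-- If `A v = 0` then `e^A v = v`. -/
lemma exp_apply_eq_self (A : E →L[ℂ] E) (v : E) (h : A v = 0) :
    NormedSpace.exp A v = v := by
  have hsum : HasSum (fun n : ℕ => (Nat.factorial n : ℂ)⁻¹ • A ^ n) (NormedSpace.exp A) :=
    NormedSpace.exp_series_hasSum_exp' A
  have h2 : HasSum (fun n : ℕ => ((Nat.factorial n : ℂ)⁻¹ • A ^ n) v) (NormedSpace.exp A v) :=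
    hsum.mapL (ContinuousLinearMap.apply ℂ E v)
  have h3 : HasSum (fun n : ℕ => ((Nat.factorial n : ℂ)⁻¹ • A ^ n) v) (((Nat.factorial 0 : ℂ)⁻¹ • A ^ 0) v) := by
    refine hasSum_single 0 ?_
    intro n hn
    obtain ⟨m, rfl⟩ := Nat.exists_eq_succ_of_ne_zero hn
    simp [pow_succ, ContinuousLinearMap.mul_apply, h]
  have h4 := h2.unique h3
  simpa using h4

/-- Projection onto a closed invariant (together with the adjoint) subspace
commutes with the operator. -/
lemma proj_commute (K : Submodule ℂ E) [CompleteSpace ↥K] (c : E →L[ℂ] E)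
    (h1 : ∀ v ∈ K, c v ∈ K)
    (h2 : ∀ v ∈ K, ContinuousLinearMap.adjoint c v ∈ K) :
    c * (K.subtypeL ∘L K.orthogonalProjectionOnto)
      = (K.subtypeL ∘L K.orthogonalProjectionOnto) * c := by
  set p : E →L[ℂ] E := K.subtypeL ∘L K.orthogonalProjectionOnto with hpdef
  have hp : star p = p := isSelfAdjoint_starProjection K
  have hmem : ∀ v : E, p v ∈ K := fun v => (K.orthogonalProjectionOnto v).2
  have hfix : ∀ v ∈ K, p v = v := by
    intro v hv
    exact Submodule.starProjection_eq_self_iff.mpr hv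
  have key : ∀ d : E →L[ℂ] E, (∀ v ∈ K, d v ∈ K) → p * (d * p) = d * p := by
    intro d hd
    ext v
    simp only [ContinuousLinearMap.mul_apply]
    exact hfix _ (hd _ (hmem v))
  have e1 : p * (c * p) = c * p := key c h1
  have e2 : p * (ContinuousLinearMap.adjoint c * p) = ContinuousLinearMap.adjoint c * p :=
    key _ h2
  have e3 : p * c * p = p * c := by
    have := congrArg star e2
    simpa [star_mul, hp, ContinuousLinearMap.star_eq_adjoint,
      ContinuousLinearMap.adjoint_adjoint, mul_assoc] using this
  calc c * p = p * (c * p) := e1.symm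
    _ = p * c * p := by rw [mul_assoc]
    _ = p * c := e3

end Aux

section TensorAux

variable {H₁ H₂ HT : Type*}
    [NormedAddCommGroup H₁] [InnerProductSpace ℂ H₁] [CompleteSpace H₁]
    [NormedAddCommGroup H₂] [InnerProductSpace ℂ H₂] [CompleteSpace H₂]
    [NormedAddCommGroup HT] [InnerProductSpace ℂ HT] [CompleteSpace HT]

lemma HilbertTensor.adjoint_map_s6 (P : HilbertTensor H₁ H₂ HT)
    (a : H₁ →L[ℂ] H₁) (b : H₂ →L[ℂ] H₂) :
    ContinuousLinearMap.adjoint (P.map a b)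
      = P.map (ContinuousLinearMap.adjoint a) (ContinuousLinearMap.adjoint b) := by
  apply ContinuousLinearMap.ext_on P.dense_span
  rintro v ⟨ξ, η, rfl⟩
  apply ext_inner_right ℂ
  have hCLM : (innerSL ℂ (P.tmul ξ η)).comp (P.map a b)
      = innerSL ℂ (P.map (ContinuousLinearMap.adjoint a)
          (ContinuousLinearMap.adjoint b) (P.tmul ξ η)) := by
    apply ContinuousLinearMap.ext_on P.dense_span
    rintro w ⟨ξ', η', rfl⟩
    simp only [ContinuousLinearMap.comp_apply, innerSL_apply_apply, P.map_tmul, P.inner_tmul,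
      ContinuousLinearMap.adjoint_inner_left]
  intro w
  calc ⟪ContinuousLinearMap.adjoint (P.map a b) (P.tmul ξ η), w⟫_ℂ
      = ⟪P.tmul ξ η, P.map a b w⟫_ℂ := ContinuousLinearMap.adjoint_inner_left _ _ _
    _ = ((innerSL ℂ (P.tmul ξ η)).comp (P.map a b)) w := rfl
    _ = innerSL ℂ (P.map (ContinuousLinearMap.adjoint a)
          (ContinuousLinearMap.adjoint b) (P.tmul ξ η)) w := by rw [hCLM]
    _ = ⟪P.map (ContinuousLinearMap.adjoint a)
          (ContinuousLinearMap.adjoint b) (P.tmul ξ η), w⟫_ℂ := rfl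

end TensorAux

/-- if `Q Ω = 0`, then
`(x ⊗ 1) · Ad e^{iκQ⊗Q}(1 ⊗ y) (Ω ⊗ Ω) = xΩ ⊗ yΩ`; consequently cyclicity of
`Ω ⊗ Ω` for the algebra generated by `{x⊗1} ∪ {1⊗y}` implies cyclicity for
`M_{Q,κ}`, generated by `{x⊗1} ∪ {Ad e^{iκQ⊗Q}(1⊗y)}`. -/
theorem stmt6
    {H HT : Type*}
    [NormedAddCommGroup H] [InnerProductSpace ℂ H] [CompleteSpace H]
    [NormedAddCommGroup HT] [InnerProductSpace ℂ HT] [CompleteSpace HT]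
    (P : HilbertTensor H H HT)
    (Q : H →L[ℂ] H) (hQ : IsSelfAdjoint Q) (κ : ℝ)
    (Ω : H) (hΩ : Q Ω = 0) :
    (∀ x y : H →L[ℂ] H,
      (P.map x 1 * adExp ((Complex.I * (κ : ℂ)) • P.map Q Q) (P.map 1 y))
          (P.tmul Ω Ω)
        = P.tmul (x Ω) (y Ω)) ∧
    (∀ Mm Mp : VonNeumannAlgebra H,
      Dense ((fun z : HT →L[ℂ] HT => z (P.tmul Ω Ω)) ''
        genVN ((fun x : H →L[ℂ] H => P.map x 1) '' (Mm : Set (H →L[ℂ] H)) ∪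
               (fun y : H →L[ℂ] H => P.map 1 y) '' (Mp : Set (H →L[ℂ] H)))) →
      Dense ((fun z : HT →L[ℂ] HT => z (P.tmul Ω Ω)) ''
        genVN ((fun x : H →L[ℂ] H => P.map x 1) '' (Mm : Set (H →L[ℂ] H)) ∪
               (fun y : H →L[ℂ] H =>
                  adExp ((Complex.I * (κ : ℂ)) • P.map Q Q) (P.map 1 y)) ''
                 (Mp : Set (H →L[ℂ] H))))) := by
  set a : HT →L[ℂ] HT := (Complex.I * (κ : ℂ)) • P.map Q Q with ha
  set Φ : HT := P.tmul Ω Ω with hΦ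
  -- the operator `a` kills any vector of the form `tmul Ω w`
  have hazero : ∀ w : H, a (P.tmul Ω w) = 0 := by
    intro w
    rw [ha, ContinuousLinearMap.smul_apply, P.map_tmul, hΩ]
    simp
  -- part 1
  have key : ∀ x y : H →L[ℂ] H,
      (P.map x 1 * adExp a (P.map 1 y)) Φ = P.tmul (x Ω) (y Ω) := by
    intro x y
    have hexp1 : NormedSpace.exp (-a) Φ = Φ := by
      refine exp_apply_eq_self _ _ ?_
      rw [ContinuousLinearMap.neg_apply, hΦ, hazero Ω, neg_zero]
    have hexp2 : NormedSpace.exp a (P.tmul Ω (y Ω)) = P.tmul Ω (y Ω) :=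
      exp_apply_eq_self _ _ (hazero (y Ω))
    simp only [adExp, ContinuousLinearMap.mul_apply, hexp1]
    rw [hΦ, P.map_tmul, ContinuousLinearMap.one_apply, hexp2, P.map_tmul,
      ContinuousLinearMap.one_apply]
  refine ⟨key, ?_⟩
  intro Mm Mp hd
  set S : Set (HT →L[ℂ] HT) :=
    (fun x : H →L[ℂ] H => P.map x 1) '' (Mm : Set (H →L[ℂ] H)) ∪
      (fun y : H →L[ℂ] H => P.map 1 y) '' (Mp : Set (H →L[ℂ] H)) with hS
  set S' : Set (HT →L[ℂ] HT) :=
    (fun x : H →L[ℂ] H => P.map x 1) '' (Mm : Set (H →L[ℂ] H)) ∪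
      (fun y : H →L[ℂ] H => adExp a (P.map 1 y)) '' (Mp : Set (H →L[ℂ] H)) with hS'
  set G : Set HT :=
    {z : HT | ∃ x ∈ Mm, ∃ y ∈ Mp, z = P.tmul (x Ω) (y Ω)} with hG
  set V : Submodule ℂ HT := Submodule.span ℂ G with hV
  set K : Submodule ℂ HT := V.topologicalClosure with hK
  haveI : CompleteSpace ↥K := V.isClosed_topologicalClosure.completeSpace_coe
  -- invariance of V, then K, under elements of S
  have hinvV : ∀ c ∈ S, ∀ v ∈ V, c v ∈ V := by
    rintro c hc v hv
    induction hv using Submodule.span_induction with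
    | mem z hz =>
      obtain ⟨x, hx, y, hy, rfl⟩ := hz
      apply Submodule.subset_span
      rcases hc with ⟨x', hx', rfl⟩ | ⟨y', hy', rfl⟩
      · refine ⟨x' * x, mul_mem hx' hx, y, hy, ?_⟩
        rw [P.map_tmul, ContinuousLinearMap.one_apply, ContinuousLinearMap.mul_apply]
      · refine ⟨x, hx, y' * y, mul_mem hy' hy, ?_⟩
        rw [P.map_tmul, ContinuousLinearMap.one_apply, ContinuousLinearMap.mul_apply]
    | zero => simpa using Submodule.zero_mem V
    | add u w hu hw ihu ihw => simpa [map_add] using Submodule.add_mem V ihu ihw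
    | smul t u hu ihu => simpa [map_smul] using Submodule.smul_mem V t ihu
  have hinvK : ∀ c ∈ S, ∀ v ∈ K, c v ∈ K := by
    intro c hc v hv
    have hvc : v ∈ closure (V : Set HT) := hv
    have : c v ∈ closure (V : Set HT) :=
      map_mem_closure c.continuous hvc (fun w hw => hinvV c hc w hw)
    exact this
  -- S is star-closed
  have hadj1 : ContinuousLinearMap.adjoint (1 : H →L[ℂ] H) = 1 := by
    rw [← ContinuousLinearMap.star_eq_adjoint, star_one]
  have hstar : ∀ c ∈ S, ContinuousLinearMap.adjoint c ∈ S := by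
    rintro c (⟨x, hx, rfl⟩ | ⟨y, hy, rfl⟩)
    · refine Or.inl ⟨ContinuousLinearMap.adjoint x,
        SetLike.mem_coe.mpr ?_, ?_⟩
      · have := star_mem (SetLike.mem_coe.mp hx)
        rwa [ContinuousLinearMap.star_eq_adjoint] at this
      · rw [P.adjoint_map_s6, hadj1]
    · refine Or.inr ⟨ContinuousLinearMap.adjoint y,
        SetLike.mem_coe.mpr ?_, ?_⟩
      · have := star_mem (SetLike.mem_coe.mp hy)
        rwa [ContinuousLinearMap.star_eq_adjoint] at this
      · rw [P.adjoint_map_s6, hadj1]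
  -- the projection onto K lies in the commutant of S
  set p : HT →L[ℂ] HT := K.subtypeL ∘L K.orthogonalProjectionOnto with hp
  have hpS : p ∈ Set.centralizer S := by
    intro c hc
    exact proj_commute K c (hinvK c hc) (hinvK _ (hstar c hc))
  -- Φ ∈ K
  have hΦV : Φ ∈ V := by
    apply Submodule.subset_span
    exact ⟨1, one_mem Mm, 1, one_mem Mp, by
      rw [ContinuousLinearMap.one_apply]⟩
  have hΦK : Φ ∈ K := Submodule.le_topologicalClosure V hΦV
  -- orbit of genVN S lies in K
  have horbit : (fun z : HT →L[ℂ] HT => z Φ) '' genVN S ⊆ (K : Set HT) := by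
    rintro _ ⟨z, hz, rfl⟩
    have hcomm : p * z = z * p := hz p hpS
    have hpΦ : p Φ = Φ := by
      simp only [hp, ContinuousLinearMap.comp_apply, Submodule.subtypeL_apply]
      exact Submodule.starProjection_eq_self_iff.mpr hΦK
    have : z Φ = p (z Φ) := by
      conv_lhs => rw [← hpΦ]
      have := congrArg (fun w : HT →L[ℂ] HT => w Φ) hcomm
      simpa [ContinuousLinearMap.mul_apply] using this.symm
    show z Φ ∈ (K : Set HT)
    rw [this]
    exact (K.orthogonalProjectionOnto (z Φ)).2
  -- hence V is dense
  have hVdense : Dense (V : Set HT) := by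
    have hKdense : Dense (K : Set HT) := hd.mono horbit
    rw [hK] at hKdense
    have : (V.topologicalClosure : Set HT) = closure (V : Set HT) :=
      V.topologicalClosure_coe
    rw [this] at hKdense
    exact dense_closure.mp hKdense
  -- V is contained in the orbit of genVN S'
  have hsub : (V : Set HT) ⊆ (fun z : HT →L[ℂ] HT => z Φ) '' genVN S' := by
    intro v hv
    induction hv using Submodule.span_induction with
    | mem z hz =>
      obtain ⟨x, hx, y, hy, rfl⟩ := hz
      refine ⟨P.map x 1 * adExp a (P.map 1 y), ?_, key x y⟩
      apply Set.mul_mem_centralizer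
      · exact Set.subset_centralizer_centralizer (Or.inl ⟨x, hx, rfl⟩)
      · exact Set.subset_centralizer_centralizer (Or.inr ⟨y, hy, rfl⟩)
    | zero => exact ⟨0, Set.zero_mem_centralizer, by simp⟩
    | add u w hu hw ihu ihw =>
      obtain ⟨z₁, hz₁, rfl⟩ := ihu
      obtain ⟨z₂, hz₂, rfl⟩ := ihw
      exact ⟨z₁ + z₂, Set.add_mem_centralizer hz₁ hz₂,
        by simp [ContinuousLinearMap.add_apply]⟩
    | smul t u hu ihu =>
      obtain ⟨z, hz, rfl⟩ := ihu
      refine ⟨t • z, ?_, by simp⟩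
      intro m hm
      rw [mul_smul_comm, smul_mul_assoc, hz m hm]
  exact hVdense.mono hsub
end
end

section
/- For every bounded operator x on H, every n ∈ ℤ, every ξ ∈ H and every η in the range of E n, one has U_κ (x ⊗ 1) U_κ* (ξ ⊗ η) = (V(nκ) x V(nκ)* ξ) ⊗ η. Likewise, for every bounded operator y on H, every m ∈ ℤ, every ξ in the range of E m and every η ∈ H, one has U_κ (1 ⊗ y) U_κ* (ξ ⊗ η) = ξ ⊗ (V(mκ) y V(mκ)* η). -/
noncomputable section

/-- on the range of `E n` in the second factor,
`Ad U_κ (x ⊗ 1)` acts as `Ad V(nκ)(x) ⊗ 1`, and symmetrically. -/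
theorem stmt9
    {H HT : Type*}
    [NormedAddCommGroup H] [InnerProductSpace ℂ H] [CompleteSpace H]
    [NormedAddCommGroup HT] [InnerProductSpace ℂ HT] [CompleteSpace HT]
    (P : HilbertTensor H H HT)
    (E : ℤ → (H →L[ℂ] H))
    (hE_idem : ∀ n, IsIdempotentElem (E n))
    (hE_sa : ∀ n, IsSelfAdjoint (E n))
    (hE_orth : ∀ m n, m ≠ n → E m * E n = 0)
    (hE_sum : ∀ ξ : H, HasSum (fun n => E n ξ) ξ)
    (V : ℝ → (H →L[ℂ] H))
    (hV_unitary : ∀ t, V t ∈ unitary (H →L[ℂ] H))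
    (hV_eig : ∀ (t : ℝ) (n : ℤ) (ξ : H), ξ ∈ Set.range ⇑(E n) →
      V t ξ = Complex.exp (Complex.I * (n : ℂ) * (t : ℂ)) • ξ)
    (κ : ℝ) (U : HT →L[ℂ] HT)
    (hU_unitary : U ∈ unitary (HT →L[ℂ] HT))
    (hU_eig : ∀ (m n : ℤ) (ξ η : H), ξ ∈ Set.range ⇑(E m) → η ∈ Set.range ⇑(E n) →
      U (P.tmul ξ η) = Complex.exp (Complex.I * (κ : ℂ) * (m : ℂ) * (n : ℂ)) • P.tmul ξ η)
    :
    (∀ (x : H →L[ℂ] H) (n : ℤ) (ξ η : H), η ∈ Set.range ⇑(E n) →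
      (U * P.map x 1 * star U) (P.tmul ξ η)
        = P.tmul ((V ((n : ℝ) * κ) * x * star (V ((n : ℝ) * κ))) ξ) η) ∧
    (∀ (y : H →L[ℂ] H) (m : ℤ) (ξ η : H), ξ ∈ Set.range ⇑(E m) →
      (U * P.map 1 y * star U) (P.tmul ξ η)
        = P.tmul ξ ((V ((m : ℝ) * κ) * y * star (V ((m : ℝ) * κ))) η)) := by

  have hVinv : ∀ (t : ℝ) (ξ : H), V t (star (V t) ξ) = ξ := by
    intro t ξ
    have h := (hV_unitary t).2
    calc V t (star (V t) ξ) = (V t * star (V t)) ξ := rfl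
    _ = ξ := by rw [h]; rfl
  have hUinv : ∀ z : HT, star U (U z) = z := by
    intro z
    have h := hU_unitary.1
    calc star U (U z) = (star U * U) z := rfl
    _ = z := by rw [h]; rfl
  -- forward key lemma, first factor arbitrary
  have key1 : ∀ (n : ℤ) (η : H), η ∈ Set.range ⇑(E n) → ∀ ξ : H,
      U (P.tmul ξ η) = P.tmul (V ((n : ℝ) * κ) ξ) η := by
    intro n η hη ξ
    have h1 : HasSum (fun m => U (P.tmul (E m ξ) η)) (U (P.tmul ξ η)) := by
      simpa using (hE_sum ξ).mapL (U.comp (P.tmul.flip η))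
    have h2 : HasSum (fun m => U (P.tmul (E m ξ) η)) (P.tmul (V ((n : ℝ) * κ) ξ) η) := by
      have h3 : HasSum (fun m => P.tmul (V ((n : ℝ) * κ) (E m ξ)) η)
          (P.tmul (V ((n : ℝ) * κ) ξ) η) := by
        simpa using (hE_sum ξ).mapL ((P.tmul.flip η).comp (V ((n : ℝ) * κ)))
      refine h3.congr_fun fun m => ?_
      have hm : E m ξ ∈ Set.range ⇑(E m) := ⟨ξ, rfl⟩
      rw [hU_eig m n (E m ξ) η hm hη, hV_eig ((n : ℝ) * κ) m (E m ξ) hm]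
      rw [map_smul, ContinuousLinearMap.coe_smul', Pi.smul_apply]
      congr 1
      push_cast
      ring_nf
    exact h1.unique h2
  -- forward key lemma, second factor arbitrary
  have key2 : ∀ (m : ℤ) (ξ : H), ξ ∈ Set.range ⇑(E m) → ∀ η : H,
      U (P.tmul ξ η) = P.tmul ξ (V ((m : ℝ) * κ) η) := by
    intro m ξ hξ η
    have h1 : HasSum (fun n => U (P.tmul ξ (E n η))) (U (P.tmul ξ η)) := by
      simpa using (hE_sum η).mapL (U.comp (P.tmul ξ))
    have h2 : HasSum (fun n => U (P.tmul ξ (E n η))) (P.tmul ξ (V ((m : ℝ) * κ) η)) := by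
      have h3 : HasSum (fun n => P.tmul ξ (V ((m : ℝ) * κ) (E n η)))
          (P.tmul ξ (V ((m : ℝ) * κ) η)) := by
        simpa using (hE_sum η).mapL ((P.tmul ξ).comp (V ((m : ℝ) * κ)))
      refine h3.congr_fun fun n => ?_
      have hn : E n η ∈ Set.range ⇑(E n) := ⟨η, rfl⟩
      rw [hU_eig m n ξ (E n η) hξ hn, hV_eig ((m : ℝ) * κ) n (E n η) hn, map_smul]
      congr 1
      push_cast
      ring_nf
    exact h1.unique h2
  -- adjoint key lemmas
  have key1s : ∀ (n : ℤ) (η : H), η ∈ Set.range ⇑(E n) → ∀ ξ : H,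
      star U (P.tmul ξ η) = P.tmul (star (V ((n : ℝ) * κ)) ξ) η := by
    intro n η hη ξ
    have h := key1 n η hη (star (V ((n : ℝ) * κ)) ξ)
    rw [hVinv] at h
    rw [← h, hUinv]
  have key2s : ∀ (m : ℤ) (ξ : H), ξ ∈ Set.range ⇑(E m) → ∀ η : H,
      star U (P.tmul ξ η) = P.tmul ξ (star (V ((m : ℝ) * κ)) η) := by
    intro m ξ hξ η
    have h := key2 m ξ hξ (star (V ((m : ℝ) * κ)) η)
    rw [hVinv] at h
    rw [← h, hUinv]
  constructor
  · intro x n ξ η hη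
    have : (U * P.map x 1 * star U) (P.tmul ξ η)
        = U (P.map x 1 (star U (P.tmul ξ η))) := rfl
    rw [this, key1s n η hη ξ, P.map_tmul]
    simp only [ContinuousLinearMap.one_apply]
    rw [key1 n η hη]
    rfl
  · intro y m ξ η hξ
    have : (U * P.map 1 y * star U) (P.tmul ξ η)
        = U (P.map 1 y (star U (P.tmul ξ η))) := rfl
    rw [this, key2s m ξ hξ η, P.map_tmul]
    simp only [ContinuousLinearMap.one_apply]
    rw [key2 m ξ hξ]
    rfl
end
end

section
/- Fix m, n ∈ ℤ and κ ∈ ℝ. If x is a bounded operator on H with V(t) x V(t)* = e^{i m t} x for all t ∈ ℝ, then U_κ (x ⊗ 1) U_κ* = x ⊗ V(mκ). If y is a bounded operator on H with V(t) y V(t)* = e^{i n t} y for all t ∈ ℝ, then U_κ (1 ⊗ y) U_κ* = V(nκ) ⊗ y. -/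
noncomputable section

namespace Stmt10Aux

open Complex ContinuousLinearMap

variable {H : Type*} [NormedAddCommGroup H] [InnerProductSpace ℂ H] [CompleteSpace H]

local notation "⟪" x ", " y "⟫" => @inner ℂ _ _ x y

/-- An eigenvector of all `V t` with eigenvalue `e^{ist}` lies in the range of `E s`. -/
lemma eig_mem_range (E : ℤ → (H →L[ℂ] H))
    (hE_idem : ∀ n, IsIdempotentElem (E n))
    (hE_sa : ∀ n, IsSelfAdjoint (E n))
    (hE_sum : ∀ ξ : H, HasSum (fun n => E n ξ) ξ)
    (V : ℝ → (H →L[ℂ] H))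
    (hV_unitary : ∀ t, V t ∈ unitary (H →L[ℂ] H))
    (hV_eig : ∀ (t : ℝ) (n : ℤ) (ξ : H), ξ ∈ Set.range ⇑(E n) →
      V t ξ = Complex.exp (Complex.I * (n : ℂ) * (t : ℂ)) • ξ)
    (s : ℤ) (ζ : H)
    (hζ : ∀ t : ℝ, V t ζ = Complex.exp (Complex.I * (s : ℂ) * (t : ℂ)) • ζ) :
    ζ ∈ Set.range ⇑(E s) := by
  have hzero : ∀ j : ℤ, j ≠ s → E j ζ = 0 := by
    intro j hj
    have hmem : E j ζ ∈ Set.range ⇑(E j) := ⟨ζ, rfl⟩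
    -- star (V t) (E j ζ) = exp(I j t)⁻¹ • E j ζ
    have hstar : ∀ t : ℝ, star (V t) (E j ζ)
        = (Complex.exp (Complex.I * (j : ℂ) * (t : ℂ)))⁻¹ • E j ζ := by
      intro t
      have h1 : star (V t) * V t = 1 := (Unitary.mem_iff.mp (hV_unitary t)).1
      have h2 : star (V t) (V t (E j ζ)) = E j ζ := by
        have := congrArg (fun A : H →L[ℂ] H => A (E j ζ)) h1
        simpa [ContinuousLinearMap.mul_apply] using this
      rw [hV_eig t j _ hmem, map_smul] at h2
      have hne : Complex.exp (Complex.I * (j : ℂ) * (t : ℂ)) ≠ 0 := Complex.exp_ne_zero _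
      rw [eq_inv_smul_iff₀ hne]
      exact h2
    have key : ∀ t : ℝ,
        Complex.exp (Complex.I * (j : ℂ) * (t : ℂ)) * ⟪E j ζ, ζ⟫
          = Complex.exp (Complex.I * (s : ℂ) * (t : ℂ)) * ⟪E j ζ, ζ⟫ := by
      intro t
      have lhs : ⟪E j ζ, V t ζ⟫ = Complex.exp (Complex.I * (j : ℂ) * (t : ℂ)) * ⟪E j ζ, ζ⟫ := by
        rw [← ContinuousLinearMap.adjoint_inner_left, ← ContinuousLinearMap.star_eq_adjoint,
          hstar t, inner_smul_left]
        congr 1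
        rw [← Complex.exp_neg, ← Complex.exp_conj]
        congr 1
        simp [Complex.conj_ofReal]
      have rhs : ⟪E j ζ, V t ζ⟫ = Complex.exp (Complex.I * (s : ℂ) * (t : ℂ)) * ⟪E j ζ, ζ⟫ := by
        rw [hζ t, inner_smul_right]
      rw [← lhs, rhs]
    have hEjj : E j (E j ζ) = E j ζ := by
      have := congrArg (fun A : H →L[ℂ] H => A ζ) (hE_idem j).eq
      simpa [ContinuousLinearMap.mul_apply] using this
    have hadj : ContinuousLinearMap.adjoint (E j) = E j := by
      rw [← ContinuousLinearMap.star_eq_adjoint]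
      exact (hE_sa j).star_eq
    have hinner : ⟪E j ζ, ζ⟫ = ⟪E j ζ, E j ζ⟫ := by
      have h := ContinuousLinearMap.adjoint_inner_left (E j) ζ (E j ζ)
      rw [hadj, hEjj] at h
      exact h
    -- choose t = π / (j - s)
    have hjs : (j : ℝ) - (s : ℝ) ≠ 0 := by
      intro h
      exact hj (by exact_mod_cast sub_eq_zero.mp h)
    set t : ℝ := Real.pi / ((j : ℝ) - (s : ℝ)) with ht
    have hjsC : (j : ℂ) - (s : ℂ) ≠ 0 := by
      intro h
      exact hjs (by exact_mod_cast h)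
    have harg : Complex.I * (j : ℂ) * (t : ℂ)
        = Complex.I * (s : ℂ) * (t : ℂ) + (Real.pi : ℂ) * Complex.I := by
      have htC : (t : ℂ) = (Real.pi : ℂ) / ((j : ℂ) - (s : ℂ)) := by
        rw [ht]; push_cast; ring
      rw [htC]
      field_simp
      ring
    have hexp : Complex.exp (Complex.I * (j : ℂ) * (t : ℂ))
        = - Complex.exp (Complex.I * (s : ℂ) * (t : ℂ)) := by
      rw [harg, Complex.exp_add, Complex.exp_pi_mul_I]
      ring
    have h0 : ⟪E j ζ, ζ⟫ = 0 := by
      have := key t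
      rw [hexp] at this
      have h2 : (2 : ℂ) * Complex.exp (Complex.I * (s : ℂ) * (t : ℂ)) * ⟪E j ζ, ζ⟫ = 0 := by
        linear_combination -this
      have hc : (2 : ℂ) * Complex.exp (Complex.I * (s : ℂ) * (t : ℂ)) ≠ 0 :=
        mul_ne_zero two_ne_zero (Complex.exp_ne_zero _)
      exact (mul_eq_zero.mp h2).resolve_left hc
    rw [hinner] at h0
    exact inner_self_eq_zero.mp h0
  -- conclude ζ = E s ζ
  have h1 : HasSum (fun j : ℤ => if j = s then E s ζ else 0) ζ := by
    convert hE_sum ζ using 1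
    funext j
    by_cases h : j = s
    · subst h; simp
    · simp [h, hzero j h]
  have h2 : HasSum (fun j : ℤ => if j = s then E s ζ else 0) (E s ζ) := hasSum_ite_eq s _
  exact ⟨ζ, (h1.unique h2).symm⟩

/-- Covariance relation implies `x` shifts the spectral subspaces by `m`. -/
lemma covar_shift (E : ℤ → (H →L[ℂ] H))
    (hE_idem : ∀ n, IsIdempotentElem (E n))
    (hE_sa : ∀ n, IsSelfAdjoint (E n))
    (hE_sum : ∀ ξ : H, HasSum (fun n => E n ξ) ξ)
    (V : ℝ → (H →L[ℂ] H))
    (hV_unitary : ∀ t, V t ∈ unitary (H →L[ℂ] H))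
    (hV_eig : ∀ (t : ℝ) (n : ℤ) (ξ : H), ξ ∈ Set.range ⇑(E n) →
      V t ξ = Complex.exp (Complex.I * (n : ℂ) * (t : ℂ)) • ξ)
    (m : ℤ) (x : H →L[ℂ] H)
    (hx : ∀ t : ℝ, V t * x * star (V t) = Complex.exp (Complex.I * (m : ℂ) * (t : ℂ)) • x)
    (k : ℤ) (ξ : H) (hξ : ξ ∈ Set.range ⇑(E k)) :
    x ξ ∈ Set.range ⇑(E (k + m)) := by
  apply eig_mem_range E hE_idem hE_sa hE_sum V hV_unitary hV_eig
  intro t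
  have h1 : star (V t) * V t = 1 := (Unitary.mem_iff.mp (hV_unitary t)).1
  have h2 : V t * x = Complex.exp (Complex.I * (m : ℂ) * (t : ℂ)) • (x * V t) := by
    have h3 := congrArg (fun A : H →L[ℂ] H => A * V t) (hx t)
    simpa [mul_assoc, h1, smul_mul_assoc] using h3
  have h4 : V t (x ξ) = Complex.exp (Complex.I * (m : ℂ) * (t : ℂ)) • x (V t ξ) := by
    have := congrArg (fun A : H →L[ℂ] H => A ξ) h2
    simpa [ContinuousLinearMap.mul_apply] using this
  rw [h4, hV_eig t k ξ hξ, map_smul, smul_smul, ← Complex.exp_add]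
  congr 2
  push_cast
  ring

variable {HT : Type*} [NormedAddCommGroup HT] [InnerProductSpace ℂ HT] [CompleteSpace HT]

/-- Two operators that agree on elementary tensors of spectral vectors are equal. -/
lemma tensor_ext (P : HilbertTensor H H HT)
    (E : ℤ → (H →L[ℂ] H))
    (hE_sum : ∀ ξ : H, HasSum (fun n => E n ξ) ξ)
    (A B : HT →L[ℂ] HT)
    (h : ∀ (k l : ℤ) (ξ η : H), ξ ∈ Set.range ⇑(E k) → η ∈ Set.range ⇑(E l) →
      A (P.tmul ξ η) = B (P.tmul ξ η)) : A = B := by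
  have step1 : ∀ (k : ℤ) (ξ η : H), ξ ∈ Set.range ⇑(E k) →
      A (P.tmul ξ η) = B (P.tmul ξ η) := by
    intro k ξ η hξ
    have hA : HasSum (fun l => (A.comp (P.tmul ξ)) (E l η)) ((A.comp (P.tmul ξ)) η) :=
      (hE_sum η).mapL (A.comp (P.tmul ξ))
    have hB : HasSum (fun l => (B.comp (P.tmul ξ)) (E l η)) ((B.comp (P.tmul ξ)) η) :=
      (hE_sum η).mapL (B.comp (P.tmul ξ))
    have hfun : (fun l => (A.comp (P.tmul ξ)) (E l η))
        = fun l => (B.comp (P.tmul ξ)) (E l η) := by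
      funext l
      simpa using h k l ξ (E l η) hξ ⟨η, rfl⟩
    rw [hfun] at hA
    simpa using hA.unique hB
  have key : ∀ ξ η : H, A (P.tmul ξ η) = B (P.tmul ξ η) := by
    intro ξ η
    have hA : HasSum (fun k => (A.comp (P.tmul.flip η)) (E k ξ)) ((A.comp (P.tmul.flip η)) ξ) :=
      (hE_sum ξ).mapL (A.comp (P.tmul.flip η))
    have hB : HasSum (fun k => (B.comp (P.tmul.flip η)) (E k ξ)) ((B.comp (P.tmul.flip η)) ξ) :=
      (hE_sum ξ).mapL (B.comp (P.tmul.flip η))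
    have hfun : (fun k => (A.comp (P.tmul.flip η)) (E k ξ))
        = fun k => (B.comp (P.tmul.flip η)) (E k ξ) := by
      funext k
      simpa using step1 k (E k ξ) η ⟨ξ, rfl⟩
    rw [hfun] at hA
    simpa using hA.unique hB
  refine ContinuousLinearMap.ext_on P.dense_span ?_
  rintro z ⟨ξ, η, rfl⟩
  exact key ξ η

end Stmt10Aux

/-- if `Ad V(t)(x) = e^{imt} x` for all `t`, then
`U_κ (x ⊗ 1) U_κ* = x ⊗ V(mκ)`; if `Ad V(t)(y) = e^{int} y`, then
`U_κ (1 ⊗ y) U_κ* = V(nκ) ⊗ y`. -/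
theorem stmt10
    {H HT : Type*}
    [NormedAddCommGroup H] [InnerProductSpace ℂ H] [CompleteSpace H]
    [NormedAddCommGroup HT] [InnerProductSpace ℂ HT] [CompleteSpace HT]
    (P : HilbertTensor H H HT)
    (E : ℤ → (H →L[ℂ] H))
    (hE_idem : ∀ n, IsIdempotentElem (E n))
    (hE_sa : ∀ n, IsSelfAdjoint (E n))
    (hE_orth : ∀ m n, m ≠ n → E m * E n = 0)
    (hE_sum : ∀ ξ : H, HasSum (fun n => E n ξ) ξ)
    (V : ℝ → (H →L[ℂ] H))
    (hV_unitary : ∀ t, V t ∈ unitary (H →L[ℂ] H))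
    (hV_eig : ∀ (t : ℝ) (n : ℤ) (ξ : H), ξ ∈ Set.range ⇑(E n) →
      V t ξ = Complex.exp (Complex.I * (n : ℂ) * (t : ℂ)) • ξ)
    (κ : ℝ) (U : HT →L[ℂ] HT)
    (hU_unitary : U ∈ unitary (HT →L[ℂ] HT))
    (hU_eig : ∀ (m n : ℤ) (ξ η : H), ξ ∈ Set.range ⇑(E m) → η ∈ Set.range ⇑(E n) →
      U (P.tmul ξ η) = Complex.exp (Complex.I * (κ : ℂ) * (m : ℂ) * (n : ℂ)) • P.tmul ξ η)
    (m n : ℤ) :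
    (∀ x : H →L[ℂ] H,
      (∀ t : ℝ, V t * x * star (V t) = Complex.exp (Complex.I * (m : ℂ) * (t : ℂ)) • x) →
      U * P.map x 1 * star U = P.map x (V ((m : ℝ) * κ))) ∧
    (∀ y : H →L[ℂ] H,
      (∀ t : ℝ, V t * y * star (V t) = Complex.exp (Complex.I * (n : ℂ) * (t : ℂ)) • y) →
      U * P.map 1 y * star U = P.map (V ((n : ℝ) * κ)) y) := by
  have hUstar : ∀ (k l : ℤ) (ξ η : H), ξ ∈ Set.range ⇑(E k) → η ∈ Set.range ⇑(E l) →
      star U (P.tmul ξ η)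
        = (Complex.exp (Complex.I * (κ : ℂ) * (k : ℂ) * (l : ℂ)))⁻¹ • P.tmul ξ η := by
    intro k l ξ η hξ hη
    have h1 : star U * U = 1 := (Unitary.mem_iff.mp hU_unitary).1
    have h2 : star U (U (P.tmul ξ η)) = P.tmul ξ η := by
      have := congrArg (fun A : HT →L[ℂ] HT => A (P.tmul ξ η)) h1
      simpa [ContinuousLinearMap.mul_apply] using this
    rw [hU_eig k l ξ η hξ hη, map_smul] at h2
    rw [eq_inv_smul_iff₀ (Complex.exp_ne_zero _)]
    exact h2
  constructor
  · intro x hx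
    refine Stmt10Aux.tensor_ext P E hE_sum _ _ ?_
    intro k l ξ η hξ hη
    have hxξ : x ξ ∈ Set.range ⇑(E (k + m)) :=
      Stmt10Aux.covar_shift E hE_idem hE_sa hE_sum V hV_unitary hV_eig m x hx k ξ hξ
    rw [ContinuousLinearMap.mul_apply, ContinuousLinearMap.mul_apply,
      hUstar k l ξ η hξ hη, map_smul, map_smul, P.map_tmul, ContinuousLinearMap.one_apply,
      hU_eig (k + m) l (x ξ) η hxξ hη, smul_smul, P.map_tmul,
      hV_eig ((m : ℝ) * κ) l η hη, map_smul]
    congr 1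
    rw [← Complex.exp_neg, ← Complex.exp_add]
    congr 1
    push_cast
    ring
  · intro y hy
    refine Stmt10Aux.tensor_ext P E hE_sum _ _ ?_
    intro k l ξ η hξ hη
    have hyη : y η ∈ Set.range ⇑(E (l + n)) :=
      Stmt10Aux.covar_shift E hE_idem hE_sa hE_sum V hV_unitary hV_eig n y hy l η hη
    rw [ContinuousLinearMap.mul_apply, ContinuousLinearMap.mul_apply,
      hUstar k l ξ η hξ hη, map_smul, map_smul, P.map_tmul, ContinuousLinearMap.one_apply,
      hU_eig k (l + n) ξ (y η) hξ hyη, smul_smul, P.map_tmul,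
      hV_eig ((n : ℝ) * κ) k ξ hξ]
    rw [show P.tmul (Complex.exp (Complex.I * (k : ℂ) * (((n : ℝ) * κ : ℝ) : ℂ)) • ξ) (y η)
        = Complex.exp (Complex.I * (k : ℂ) * (((n : ℝ) * κ : ℝ) : ℂ)) • P.tmul ξ (y η) by
      rw [map_smul, ContinuousLinearMap.smul_apply]]
    congr 1
    rw [← Complex.exp_neg, ← Complex.exp_add]
    congr 1
    push_cast
    ring
end
end

section
/- For every x ∈ M and every n ∈ ℤ, the Fourier component x_n is a bounded operator belonging to M, it satisfies V(t) x_n V(t)* = e^{i n t} x_n for all t ∈ ℝ, and for all l, k ∈ ℤ one has E(l) x_n E(k) = E(l) x E(k) if l − k = n and E(l) x_n E(k) = 0 if l − k ≠ n. -/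
noncomputable section

open MeasureTheory intervalIntegral

noncomputable section

namespace S12

variable {H : Type*} [NormedAddCommGroup H] [InnerProductSpace ℂ H] [CompleteSpace H]

omit [CompleteSpace H] in
lemma cont_apply (V : ℝ → (H →L[ℂ] H)) (hnorm : ∀ t (ξ : H), ‖V t ξ‖ = ‖ξ‖)
    (hV_cont : ∀ ξ : H, Continuous fun t => V t ξ)
    {η : ℝ → H} (hη : Continuous η) : Continuous fun s => V s (η s) := by
  rw [continuous_iff_continuousAt]
  intro t₀
  have h1 : Filter.Tendsto (fun s => V s (η s - η t₀)) (nhds t₀) (nhds 0) := by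
    have hb : Filter.Tendsto (fun s => ‖η s - η t₀‖) (nhds t₀) (nhds 0) := by
      have hc : Continuous (fun s => ‖η s - η t₀‖) :=
        (hη.sub (continuous_const (y := η t₀))).norm
      have := hc.continuousAt (x := t₀)
      unfold ContinuousAt at this
      simpa using this
    exact squeeze_zero_norm (fun s => le_of_eq (hnorm s _)) hb
  have h2 : Filter.Tendsto (fun s => V s (η t₀)) (nhds t₀) (nhds (V t₀ (η t₀))) :=
    (hV_cont (η t₀)).continuousAt
  have h3 := h1.add h2
  rw [zero_add] at h3
  have he : (fun s => V s (η s)) = fun s => V s (η s - η t₀) + V s (η t₀) := by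
    funext s; rw [← map_add, sub_add_cancel]
  unfold ContinuousAt
  rw [he]
  convert h3 using 2
  simp

/-- The character integral: `∫₀^{2π} e^{imt} dt = 2π δ_{m,0}`. -/
lemma char_integral (m : ℤ) :
    (∫ t in (0:ℝ)..(2 * Real.pi), Complex.exp (Complex.I * (m:ℂ) * (t:ℂ)))
      = if m = 0 then (2 * (Real.pi:ℂ)) else 0 := by
  rcases eq_or_ne m 0 with hm | hm
  · subst hm
    simp only [Int.cast_zero, mul_zero, zero_mul, Complex.exp_zero, if_true]
    rw [intervalIntegral.integral_const]
    rw [sub_zero, Complex.real_smul]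
    push_cast
    ring
  · rw [if_neg hm]
    have hc : (Complex.I * (m:ℂ)) ≠ 0 := by
      simp [Complex.I_ne_zero, hm]
    have := integral_exp_mul_complex (a := 0) (b := 2 * Real.pi) hc
    simp only [mul_assoc] at this ⊢
    rw [this]
    have h1 : Complex.exp (Complex.I * ((m:ℂ) * ((2 * Real.pi : ℝ) : ℂ))) = 1 := by
      push_cast
      rw [show Complex.I * ((m:ℂ) * (2 * (Real.pi:ℂ))) = (m:ℂ) * (2 * Real.pi * Complex.I) by ring]
      exact Complex.exp_int_mul_two_pi_mul_I m
    rw [h1]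
    simp

omit [InnerProductSpace ℂ H] in
lemma shift_periodic_integral [NormedSpace ℝ H] (g : ℝ → H)
    (hg : Function.Periodic g (2 * Real.pi)) (t : ℝ) :
    ∫ s in (0:ℝ)..(2 * Real.pi), g (s + t) = ∫ s in (0:ℝ)..(2 * Real.pi), g s := by
  rw [intervalIntegral.integral_comp_add_right]
  have h := hg.intervalIntegral_add_eq t 0
  rw [zero_add] at h
  rw [zero_add, add_comm (2 * Real.pi) t]
  exact h

lemma exp_int_per (m : ℤ) (u : ℝ) :
    Complex.exp (-(Complex.I * (m:ℂ) * ((u + 2 * Real.pi : ℝ) : ℂ)))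
      = Complex.exp (-(Complex.I * (m:ℂ) * (u:ℂ))) := by
  push_cast
  rw [show -(Complex.I * (m:ℂ) * ((u:ℂ) + 2 * (Real.pi:ℂ)))
      = -(Complex.I * (m:ℂ) * (u:ℂ)) + ((-m : ℤ) : ℂ) * (2 * Real.pi * Complex.I) by
    push_cast; ring]
  rw [Complex.exp_add, Complex.exp_int_mul_two_pi_mul_I, mul_one]

end S12

/-- the `n`-th Fourier component `x_n` of `x ∈ M` (defined by the
Bochner integral `x_n ξ = (1/2π)∫₀^{2π} e^{-ins} V(s) x V(s)* ξ ds`) is a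
bounded operator in `M`, satisfies `V(t) x_n V(t)* = e^{int} x_n`, and its
matrix elements are `E(l) x_n E(k) = E(l) x E(k)` for `l − k = n`, `0` otherwise. -/
theorem stmt12
    {H : Type*}
    [NormedAddCommGroup H] [InnerProductSpace ℂ H] [CompleteSpace H]
    (M : VonNeumannAlgebra H)
    (V : ℝ → (H →L[ℂ] H))
    (hV_unitary : ∀ t, V t ∈ unitary (H →L[ℂ] H))
    (hV_grp : ∀ s t : ℝ, V s * V t = V (s + t))
    (hV_zero : V 0 = 1)
    (hV_per : V (2 * Real.pi) = 1)
    (hV_cont : ∀ ξ : H, Continuous fun t : ℝ => V t ξ)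
    (hV_inv : ∀ t : ℝ, (fun x : H →L[ℂ] H => V t * x * star (V t)) ''
      (M : Set (H →L[ℂ] H)) = (M : Set (H →L[ℂ] H)))
    (E : ℤ → (H →L[ℂ] H))
    (hE_def : ∀ (n : ℤ) (ξ : H), E n ξ = (2 * (Real.pi : ℂ))⁻¹ •
      ∫ s in (0:ℝ)..(2 * Real.pi),
        Complex.exp (-(Complex.I * (n : ℂ) * (s : ℂ))) • V s ξ)
    :
    ∀ x ∈ M, ∀ n : ℤ, ∃ xn : H →L[ℂ] H,
      (∀ ξ : H, xn ξ = (2 * (Real.pi : ℂ))⁻¹ •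
        ∫ s in (0:ℝ)..(2 * Real.pi),
          Complex.exp (-(Complex.I * (n : ℂ) * (s : ℂ))) • ((V s * x * star (V s)) ξ)) ∧
      xn ∈ M ∧
      (∀ t : ℝ, V t * xn * star (V t) =
        Complex.exp (Complex.I * (n : ℂ) * (t : ℂ)) • xn) ∧
      (∀ l k : ℤ,
        (l - k = n → E l * xn * E k = E l * x * E k) ∧
        (l - k ≠ n → E l * xn * E k = 0)) := by
  intro x hx n
  -- basic facts about V
  have hVsV : ∀ t, star (V t) * V t = 1 := fun t => (Unitary.mem_iff.mp (hV_unitary t)).1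
  have hstar : ∀ t, star (V t) = V (-t) := by
    intro t
    have h1 : V t * V (-t) = 1 := by rw [hV_grp, add_neg_cancel, hV_zero]
    calc star (V t) = star (V t) * (V t * V (-t)) := by rw [h1, mul_one]
    _ = (star (V t) * V t) * V (-t) := by rw [mul_assoc]
    _ = V (-t) := by rw [hVsV, one_mul]
  have hnorm : ∀ t (ξ : H), ‖V t ξ‖ = ‖ξ‖ := by
    intro t ξ
    have h2 : V (-t) (V t ξ) = ξ := by
      rw [← ContinuousLinearMap.mul_apply, hV_grp, neg_add_cancel, hV_zero,
        ContinuousLinearMap.one_apply]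
    have hsq : ‖V t ξ‖ ^ 2 = ‖ξ‖ ^ 2 := by
      have e1 : (inner ℂ (V t ξ) (V t ξ) : ℂ) = inner ℂ ξ ξ := by
        have := ContinuousLinearMap.adjoint_inner_left (A := V t) (x := ξ) (y := V t ξ)
        rw [← ContinuousLinearMap.star_eq_adjoint] at this
        rw [show (inner ℂ (V t ξ) (V t ξ) : ℂ) = inner ℂ ((star (V t) * V t) ξ) ξ from ?_, hVsV,
          ContinuousLinearMap.one_apply]
        rw [ContinuousLinearMap.mul_apply]
        exact this.symm
      have := congrArg (RCLike.re (K := ℂ)) e1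
      rwa [inner_self_eq_norm_sq (𝕜 := ℂ), inner_self_eq_norm_sq (𝕜 := ℂ)] at this
    have := congrArg Real.sqrt hsq
    rwa [Real.sqrt_sq (norm_nonneg _), Real.sqrt_sq (norm_nonneg _)] at this
  have hper : ∀ s, V (s + 2 * Real.pi) = V s := fun s => by
    rw [← hV_grp, hV_per, mul_one]
  have hconj_apply : ∀ (y : H →L[ℂ] H) (s : ℝ) (ξ : H),
      (V s * y * star (V s)) ξ = V s (y (V (-s) ξ)) := by
    intro y s ξ
    rw [hstar]
    rfl
  have hmem : ∀ s, V s * x * star (V s) ∈ M := by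
    intro s
    have h := hV_inv s
    have : V s * x * star (V s) ∈
        (fun z : H →L[ℂ] H => V s * z * star (V s)) '' (M : Set (H →L[ℂ] H)) :=
      ⟨x, hx, rfl⟩
    rw [h] at this
    exact this
  -- continuity and integrability of the integrand
  have hexp_cont : ∀ m : ℤ, Continuous fun s : ℝ =>
      Complex.exp (-(Complex.I * (m:ℂ) * (s:ℂ))) := by
    intro m
    exact Complex.continuous_exp.comp (by continuity)
  have hconj_cont : ∀ ξ : H, Continuous fun s : ℝ => (V s * x * star (V s)) ξ := by
    intro ξ
    have he : (fun s : ℝ => (V s * x * star (V s)) ξ)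
        = fun s => V s (x (V (-s) ξ)) := funext fun s => hconj_apply x s ξ
    rw [he]
    exact S12.cont_apply V hnorm hV_cont
      (x.continuous.comp ((hV_cont ξ).comp continuous_neg))
  have hF_int : ∀ ξ : H, IntervalIntegrable
      (fun s : ℝ => Complex.exp (-(Complex.I * (n:ℂ) * (s:ℂ))) • ((V s * x * star (V s)) ξ))
      volume 0 (2 * Real.pi) :=
    fun ξ => ((hexp_cont n).smul (hconj_cont ξ)).intervalIntegrable _ _
  have hE_int : ∀ (m : ℤ) (ξ : H), IntervalIntegrable
      (fun s : ℝ => Complex.exp (-(Complex.I * (m:ℂ) * (s:ℂ))) • V s ξ)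
      volume 0 (2 * Real.pi) :=
    fun m ξ => ((hexp_cont m).smul (hV_cont ξ)).intervalIntegrable _ _
  have hexp_norm : ∀ (m : ℤ) (s : ℝ), ‖Complex.exp (-(Complex.I * (m:ℂ) * (s:ℂ)))‖ = 1 := by
    intro m s
    rw [Complex.norm_exp]
    norm_num [Complex.mul_re, Complex.mul_im]
  -- definition of xn
  set L : H →ₗ[ℂ] H :=
    { toFun := fun ξ => (2 * (Real.pi : ℂ))⁻¹ •
        ∫ s in (0:ℝ)..(2 * Real.pi),
          Complex.exp (-(Complex.I * (n : ℂ) * (s : ℂ))) • ((V s * x * star (V s)) ξ)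
      map_add' := fun ξ η => by
        have he : (fun s : ℝ => Complex.exp (-(Complex.I * (n:ℂ) * (s:ℂ))) •
              ((V s * x * star (V s)) (ξ + η)))
            = fun s : ℝ => Complex.exp (-(Complex.I * (n:ℂ) * (s:ℂ))) •
                ((V s * x * star (V s)) ξ)
              + Complex.exp (-(Complex.I * (n:ℂ) * (s:ℂ))) • ((V s * x * star (V s)) η) :=
          funext fun s => by rw [_root_.map_add, smul_add]
        show (2 * (Real.pi : ℂ))⁻¹ • ∫ s in (0:ℝ)..(2 * Real.pi),
            Complex.exp (-(Complex.I * (n:ℂ) * (s:ℂ))) • ((V s * x * star (V s)) (ξ + η)) = _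
        rw [he, intervalIntegral.integral_add (hF_int ξ) (hF_int η), smul_add]
      map_smul' := fun c ξ => by
        have he : (fun s : ℝ => Complex.exp (-(Complex.I * (n:ℂ) * (s:ℂ))) •
              ((V s * x * star (V s)) (c • ξ)))
            = fun s : ℝ => c • (Complex.exp (-(Complex.I * (n:ℂ) * (s:ℂ))) •
                ((V s * x * star (V s)) ξ)) :=
          funext fun s => by rw [_root_.map_smul, smul_comm]
        show (2 * (Real.pi : ℂ))⁻¹ • ∫ s in (0:ℝ)..(2 * Real.pi),
            Complex.exp (-(Complex.I * (n:ℂ) * (s:ℂ))) • ((V s * x * star (V s)) (c • ξ)) = _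
        rw [he, intervalIntegral.integral_smul, smul_comm]
        rfl } with hL
  have hLbound : ∀ ξ : H, ‖L ξ‖ ≤ ‖x‖ * ‖ξ‖ := by
    intro ξ
    have hpi : (0:ℝ) < 2 * Real.pi := by positivity
    have h1 : ‖∫ s in (0:ℝ)..(2 * Real.pi),
        Complex.exp (-(Complex.I * (n : ℂ) * (s : ℂ))) • ((V s * x * star (V s)) ξ)‖
        ≤ (‖x‖ * ‖ξ‖) * |2 * Real.pi - 0| := by
      apply intervalIntegral.norm_integral_le_of_norm_le_const
      intro s _
      rw [norm_smul, hexp_norm n s, one_mul, hconj_apply, hnorm]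
      calc ‖x (V (-s) ξ)‖ ≤ ‖x‖ * ‖V (-s) ξ‖ := x.le_opNorm _
      _ = ‖x‖ * ‖ξ‖ := by rw [hnorm]
    have hLξ : L ξ = (2 * (Real.pi : ℂ))⁻¹ • ∫ s in (0:ℝ)..(2 * Real.pi),
        Complex.exp (-(Complex.I * (n : ℂ) * (s : ℂ))) • ((V s * x * star (V s)) ξ) := rfl
    have h2 : ‖L ξ‖ = (2 * Real.pi)⁻¹ * ‖∫ s in (0:ℝ)..(2 * Real.pi),
        Complex.exp (-(Complex.I * (n : ℂ) * (s : ℂ))) • ((V s * x * star (V s)) ξ)‖ := by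
      rw [hLξ, norm_smul, norm_inv]
      congr 2
      rw [show (2 * (Real.pi:ℂ)) = ((2 * Real.pi : ℝ) : ℂ) by push_cast; ring,
        Complex.norm_real, Real.norm_eq_abs, abs_of_pos hpi]
    rw [h2]
    rw [sub_zero, abs_of_pos hpi] at h1
    calc (2 * Real.pi)⁻¹ * ‖_‖ ≤ (2 * Real.pi)⁻¹ * ((‖x‖ * ‖ξ‖) * (2 * Real.pi)) := by
          apply mul_le_mul_of_nonneg_left h1 (by positivity)
    _ = ‖x‖ * ‖ξ‖ := by field_simp
  set xn : H →L[ℂ] H := L.mkContinuous ‖x‖ hLbound with hxn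
  have hxn_apply : ∀ ξ : H, xn ξ = (2 * (Real.pi : ℂ))⁻¹ •
      ∫ s in (0:ℝ)..(2 * Real.pi),
        Complex.exp (-(Complex.I * (n : ℂ) * (s : ℂ))) • ((V s * x * star (V s)) ξ) :=
    fun ξ => rfl
  have two_pi_ne : (2 * (Real.pi:ℂ)) ≠ 0 := by
    simp [Real.pi_ne_zero]
  refine ⟨xn, hxn_apply, ?_, ?_, ?_⟩
  · -- membership in M
    have hcc : xn ∈ Set.centralizer (Set.centralizer (M : Set (H →L[ℂ] H))) := by
      rw [Set.mem_centralizer_iff]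
      intro y hy
      ext ξ
      show y (xn ξ) = xn (y ξ)
      rw [hxn_apply, hxn_apply, _root_.map_smul,
        ← ContinuousLinearMap.intervalIntegral_comp_comm y (hF_int ξ)]
      congr 1
      congr 1
      funext s
      rw [_root_.map_smul]
      congr 1
      have h := Set.mem_centralizer_iff.mp hy _ (hmem s)
      have h2 : (V s * x * star (V s)) (y ξ) = y ((V s * x * star (V s)) ξ) := by
        have := congrArg (fun T : H →L[ℂ] H => T ξ) h
        simpa [ContinuousLinearMap.mul_apply] using this
      exact h2.symm
    exact SetLike.mem_coe.mp (M.centralizer_centralizer ▸ hcc)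
  · -- covariance
    intro t
    ext ξ
    have e1 : (V t * xn * star (V t)) ξ = V t (xn (V (-t) ξ)) := hconj_apply xn t ξ
    rw [e1, hxn_apply, _root_.map_smul,
      ← ContinuousLinearMap.intervalIntegral_comp_comm (V t) (hF_int _)]
    have e2 : ∀ s : ℝ, V t (Complex.exp (-(Complex.I * (n:ℂ) * (s:ℂ))) •
          ((V s * x * star (V s)) (V (-t) ξ)))
        = Complex.exp (Complex.I * (n:ℂ) * (t:ℂ)) •
          (Complex.exp (-(Complex.I * (n:ℂ) * ((s + t : ℝ) : ℂ))) •
            ((V (s + t) * x * star (V (s + t))) ξ)) := by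
      intro s
      rw [_root_.map_smul]
      have e3 : V t ((V s * x * star (V s)) (V (-t) ξ))
          = (V (s + t) * x * star (V (s + t))) ξ := by
        rw [hconj_apply, hconj_apply]
        have a1 : V (-s) (V (-t) ξ) = V (-(s + t)) ξ := by
          rw [← ContinuousLinearMap.mul_apply, hV_grp,
            show (-s) + (-t) = -(s + t) from by ring]
        have a2 : ∀ η : H, V t (V s η) = V (s + t) η := by
          intro η
          rw [← ContinuousLinearMap.mul_apply, hV_grp, add_comm]
        rw [a1, a2]
      rw [e3, smul_smul]
      have e4 : Complex.exp (-(Complex.I * (n:ℂ) * (s:ℂ)))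
          = Complex.exp (Complex.I * (n:ℂ) * (t:ℂ)) *
            Complex.exp (-(Complex.I * (n:ℂ) * ((s + t : ℝ) : ℂ))) := by
        rw [← Complex.exp_add]
        congr 1
        push_cast
        ring
      rw [e4, mul_smul]
    simp only [e2]
    rw [intervalIntegral.integral_smul]
    have hgper : Function.Periodic (fun u : ℝ =>
        Complex.exp (-(Complex.I * (n:ℂ) * (u:ℂ))) •
          ((V u * x * star (V u)) ξ)) (2 * Real.pi) := by
      intro u
      simp only
      rw [S12.exp_int_per, hper]
    rw [S12.shift_periodic_integral _ hgper t]
    rw [ContinuousLinearMap.smul_apply, hxn_apply]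
    exact smul_comm _ _ _
  · -- matrix elements
    have hVE : ∀ (r : ℝ) (m : ℤ) (η : H),
        V r (E m η) = Complex.exp (Complex.I * (m:ℂ) * (r:ℂ)) • E m η := by
      intro r m η
      rw [hE_def, _root_.map_smul,
        ← ContinuousLinearMap.intervalIntegral_comp_comm (V r) (hE_int m η)]
      have e2 : ∀ s : ℝ, V r (Complex.exp (-(Complex.I * (m:ℂ) * (s:ℂ))) • V s η)
          = Complex.exp (Complex.I * (m:ℂ) * (r:ℂ)) •
            (Complex.exp (-(Complex.I * (m:ℂ) * ((s + r : ℝ) : ℂ))) • V (s + r) η) := by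
        intro s
        rw [_root_.map_smul]
        have a2 : V r (V s η) = V (s + r) η := by
          rw [← ContinuousLinearMap.mul_apply, hV_grp, add_comm]
        rw [a2]
        have e4 : Complex.exp (-(Complex.I * (m:ℂ) * (s:ℂ)))
            = Complex.exp (Complex.I * (m:ℂ) * (r:ℂ)) *
              Complex.exp (-(Complex.I * (m:ℂ) * ((s + r : ℝ) : ℂ))) := by
          rw [← Complex.exp_add]
          congr 1
          push_cast
          ring
        rw [e4, mul_smul]
      simp only [e2]
      rw [intervalIntegral.integral_smul]
      have hgper : Function.Periodic (fun u : ℝ =>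
          Complex.exp (-(Complex.I * (m:ℂ) * (u:ℂ))) • V u η) (2 * Real.pi) := by
        intro u
        simp only
        rw [S12.exp_int_per, hper]
      rw [S12.shift_periodic_integral _ hgper r]
      exact smul_comm _ _ _
    have hEE : ∀ (a m : ℤ) (η : H), E a (E m η) = if a = m then E m η else 0 := by
      intro a m η
      rw [hE_def a]
      have e3 : ∀ s : ℝ, Complex.exp (-(Complex.I * (a:ℂ) * (s:ℂ))) • V s (E m η)
          = Complex.exp (Complex.I * ((m - a : ℤ):ℂ) * (s:ℂ)) • E m η := by
        intro s
        rw [hVE, smul_smul, ← Complex.exp_add]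
        congr 2
        push_cast
        ring
      simp only [e3]
      rw [intervalIntegral.integral_smul_const, S12.char_integral (m - a)]
      rcases eq_or_ne a m with h | h
      · rw [if_pos (by omega : m - a = 0), if_pos h, smul_smul,
          inv_mul_cancel₀ two_pi_ne, one_smul]
      · rw [if_neg (by omega : ¬ m - a = 0), if_neg h, zero_smul, smul_zero]
    have hxnEk : ∀ (k : ℤ) (ξ : H), xn (E k ξ) = E (n + k) (x (E k ξ)) := by
      intro k ξ
      rw [hxn_apply]
      have e4 : ∀ s : ℝ, Complex.exp (-(Complex.I * (n:ℂ) * (s:ℂ))) •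
            ((V s * x * star (V s)) (E k ξ))
          = Complex.exp (-(Complex.I * ((n + k : ℤ):ℂ) * (s:ℂ))) • V s (x (E k ξ)) := by
        intro s
        rw [hconj_apply]
        have a3 : V (-s) (E k ξ) = Complex.exp (-(Complex.I * (k:ℂ) * (s:ℂ))) • E k ξ := by
          rw [hVE]
          congr 2
          push_cast
          ring
        rw [a3, _root_.map_smul, _root_.map_smul, smul_smul, ← Complex.exp_add]
        congr 2
        push_cast
        ring
      simp only [e4]
      rw [← hE_def (n + k) (x (E k ξ))]
    intro l k
    constructor
    · intro hlk
      ext ξ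
      show E l (xn (E k ξ)) = E l (x (E k ξ))
      rw [hxnEk, show n + k = l by omega, hEE, if_pos rfl]
    · intro hlk
      ext ξ
      show E l (xn (E k ξ)) = (0 : H →L[ℂ] H) ξ
      rw [ContinuousLinearMap.zero_apply, hxnEk, hEE,
        if_neg (by omega : l ≠ n + k)]
end
end
end

section
/- Fix m, n ∈ ℤ and κ ∈ ℝ. If x and y are bounded operators on H with V(t) x V(t)* = e^{i m t} x and V(t) y V(t)* = e^{i n t} y for all t ∈ ℝ, then (x ⊗ 1) · (U_κ (1 ⊗ y) U_κ*) = (x ⊗ y) · (V(nκ) ⊗ 1), and the operator z := (x ⊗ 1) · (U_κ (1 ⊗ y) U_κ*) satisfies (V(s) ⊗ V(t)) z (V(s) ⊗ V(t))* = e^{i (m s + n t)} z for all s, t ∈ ℝ. -/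
noncomputable section

set_option linter.unusedSectionVars false
namespace StmtAux

variable {H HT : Type*}
  [NormedAddCommGroup H] [InnerProductSpace ℂ H] [CompleteSpace H]
  [NormedAddCommGroup HT] [InnerProductSpace ℂ HT] [CompleteSpace HT]
  (P : HilbertTensor H H HT)

lemma ext_op {f g : HT →L[ℂ] HT}
    (h : ∀ ξ η, f (P.tmul ξ η) = g (P.tmul ξ η)) : f = g := by
  apply ContinuousLinearMap.ext_on P.dense_span
  rintro z ⟨ξ, η, rfl⟩
  exact h ξ η

lemma ext_vec {u : HT}
    (h : ∀ ξ η, (inner ℂ u (P.tmul ξ η) : ℂ) = 0) : u = 0 := by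
  have h0 : innerSL ℂ u = (0 : HT →L[ℂ] ℂ) := by
    apply ContinuousLinearMap.ext_on P.dense_span
    rintro z ⟨ξ, η, rfl⟩
    simpa using h ξ η
  have := congrFun (congrArg (fun (f : HT →L[ℂ] ℂ) => (f : HT → ℂ)) h0) u
  simp only [innerSL_apply_apply, ContinuousLinearMap.zero_apply] at this
  exact inner_self_eq_zero.mp this

lemma tmul_smul_left (c : ℂ) (ξ : H) (η : H) :
    P.tmul (c • ξ) η = c • P.tmul ξ η := by
  rw [map_smul, ContinuousLinearMap.smul_apply]

lemma tmul_smul_right (c : ℂ) (ξ : H) (η : H) :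
    P.tmul ξ (c • η) = c • P.tmul ξ η := by
  rw [map_smul]

lemma map_mul' (a b c d : H →L[ℂ] H) :
    P.map a b * P.map c d = P.map (a * c) (b * d) :=
  ext_op P (by
    intro ξ η
    simp [ContinuousLinearMap.mul_apply, P.map_tmul])

lemma map_smul' (c d : ℂ) (a b : H →L[ℂ] H) :
    P.map (c • a) (d • b) = (c * d) • P.map a b :=
  ext_op P (by
    intro ξ η
    simp [P.map_tmul, tmul_smul_left, tmul_smul_right, smul_smul, mul_comm])

lemma map_star' (a b : H →L[ℂ] H) :
    star (P.map a b) = P.map (star a) (star b) :=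
  ext_op P (by
    intro ξ η
    rw [← sub_eq_zero]
    apply ext_vec P
    intro ξ' η'
    rw [inner_sub_left, sub_eq_zero]
    rw [ContinuousLinearMap.star_eq_adjoint, ContinuousLinearMap.adjoint_inner_left,
      P.map_tmul, P.map_tmul, P.inner_tmul, P.inner_tmul,
      ContinuousLinearMap.star_eq_adjoint, ContinuousLinearMap.star_eq_adjoint,
      ContinuousLinearMap.adjoint_inner_left, ContinuousLinearMap.adjoint_inner_left])

lemma range_idem {e : H →L[ℂ] H} (he : IsIdempotentElem e) {ξ : H} :
    ξ ∈ Set.range ⇑e ↔ e ξ = ξ := by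
  constructor
  · rintro ⟨ζ, rfl⟩
    have := congrFun (congrArg (fun (f : H →L[ℂ] H) => (f : H → H)) he) ζ
    simpa [ContinuousLinearMap.mul_apply] using this
  · intro h; exact ⟨ξ, h⟩

end StmtAux

namespace StmtAux

variable {H : Type*} [NormedAddCommGroup H] [InnerProductSpace ℂ H] [CompleteSpace H]
  (E : ℤ → (H →L[ℂ] H)) (V : ℝ → (H →L[ℂ] H))

lemma star_apply_eig {X : Type*} [NormedAddCommGroup X] [InnerProductSpace ℂ X]
    [CompleteSpace X] {U : X →L[ℂ] X}
    (hU : U ∈ unitary (X →L[ℂ] X)) {v : X} {ω : ℂ} (hω : ω ≠ 0) (h : U v = ω • v) :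
    star U v = ω⁻¹ • v := by
  have h1 := (Unitary.mem_iff.mp hU).1
  have h2 : star U (U v) = v := by
    have := DFunLike.congr_fun h1 v
    simpa [ContinuousLinearMap.mul_apply] using this
  calc star U v = star U (ω⁻¹ • (ω • v)) := by
        rw [smul_smul, inv_mul_cancel₀ hω, one_smul]
    _ = ω⁻¹ • star U (U v) := by rw [← h, map_smul, h]
    _ = ω⁻¹ • v := by rw [h2]

lemma star_comm_of_comm {A : Type*} [Monoid A] [StarMul A] {u w : A}
    (hu : u ∈ unitary A) (h : u * w = w * u) : star u * w = w * star u := by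
  obtain ⟨h1, h2⟩ := Unitary.mem_iff.mp hu
  calc star u * w = star u * (w * (u * star u)) := by rw [h2, mul_one]
    _ = star u * (u * (w * star u)) := by rw [← mul_assoc w u, ← h, mul_assoc]
    _ = (star u * u) * (w * star u) := by rw [← mul_assoc]
    _ = w * star u := by rw [h1, one_mul]

lemma hasSumV
    (hE_sum : ∀ ξ : H, HasSum (fun n => E n ξ) ξ)
    (hV_eig : ∀ (t : ℝ) (n : ℤ) (ξ : H), ξ ∈ Set.range ⇑(E n) →
      V t ξ = Complex.exp (Complex.I * (n : ℂ) * (t : ℂ)) • ξ)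
    (t : ℝ) (ξ : H) :
    HasSum (fun k : ℤ => Complex.exp (Complex.I * (k : ℂ) * (t : ℂ)) • E k ξ) (V t ξ) := by
  have hfun : (fun k : ℤ => V t (E k ξ))
      = fun k : ℤ => Complex.exp (Complex.I * (k : ℂ) * (t : ℂ)) • E k ξ := by
    funext k; exact hV_eig t k _ ⟨ξ, rfl⟩
  exact hfun ▸ (V t).hasSum (hE_sum ξ)

lemma comm_EV
    (hE_idem : ∀ n, IsIdempotentElem (E n))
    (hE_orth : ∀ m n, m ≠ n → E m * E n = 0)
    (hE_sum : ∀ ξ : H, HasSum (fun n => E n ξ) ξ)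
    (hV_eig : ∀ (t : ℝ) (n : ℤ) (ξ : H), ξ ∈ Set.range ⇑(E n) →
      V t ξ = Complex.exp (Complex.I * (n : ℂ) * (t : ℂ)) • ξ)
    (j : ℤ) (t : ℝ) (ξ : H) : E j (V t ξ) = V t (E j ξ) := by
  have h2 := (E j).hasSum (hasSumV E V hE_sum hV_eig t ξ)
  have h3 : HasSum (fun k : ℤ => E j (Complex.exp (Complex.I * (k : ℂ) * (t : ℂ)) • E k ξ))
      (E j (Complex.exp (Complex.I * (j : ℂ) * (t : ℂ)) • E j ξ)) := by
    apply hasSum_single j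
    intro k hk
    have h0 : E j (E k ξ) = 0 := by
      have := DFunLike.congr_fun (hE_orth j k (Ne.symm hk)) ξ
      simpa [ContinuousLinearMap.mul_apply] using this
    simp [map_smul, h0]
  have h4 := h2.unique h3
  have h5 : E j (E j ξ) = E j ξ := by
    have := DFunLike.congr_fun (hE_idem j) ξ
    simpa [ContinuousLinearMap.mul_apply] using this
  rw [h4, map_smul, h5, hV_eig t j _ ⟨ξ, rfl⟩]

lemma mem_of_eig
    (hE_idem : ∀ n, IsIdempotentElem (E n))
    (hE_orth : ∀ m n, m ≠ n → E m * E n = 0)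
    (hE_sum : ∀ ξ : H, HasSum (fun n => E n ξ) ξ)
    (hV_eig : ∀ (t : ℝ) (n : ℤ) (ξ : H), ξ ∈ Set.range ⇑(E n) →
      V t ξ = Complex.exp (Complex.I * (n : ℂ) * (t : ℂ)) • ξ)
    (c : ℤ) (ζ : H)
    (h : ∀ t : ℝ, V t ζ = Complex.exp (Complex.I * (c : ℂ) * (t : ℂ)) • ζ) :
    ζ ∈ Set.range ⇑(E c) := by
  rw [range_idem (hE_idem c)]
  have hz : ∀ j : ℤ, j ≠ c → E j ζ = 0 := by
    intro j hj
    set t : ℝ := Real.pi / ((j : ℝ) - (c : ℝ)) with ht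
    have hd : ((j : ℝ) - (c : ℝ)) ≠ 0 := sub_ne_zero.mpr (by exact_mod_cast hj)
    have hd' : ((j : ℂ) - (c : ℂ)) ≠ 0 := by
      intro h0; apply hd
      have : (((j : ℝ) - (c : ℝ)) : ℂ) = 0 := by push_cast; exact_mod_cast h0
      exact_mod_cast this
    have hteq : ((t : ℝ) : ℂ) = (Real.pi : ℂ) / ((j : ℂ) - (c : ℂ)) := by
      rw [ht]; push_cast; ring
    have e1 : V t (E j ζ) = Complex.exp (Complex.I * (j : ℂ) * (t : ℂ)) • E j ζ :=
      hV_eig t j _ ⟨ζ, rfl⟩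
    have e2 : V t (E j ζ) = Complex.exp (Complex.I * (c : ℂ) * (t : ℂ)) • E j ζ := by
      rw [← comm_EV E V hE_idem hE_orth hE_sum hV_eig, h t, map_smul]
    have e3 : Complex.exp (Complex.I * (j : ℂ) * (t : ℂ))
        = - Complex.exp (Complex.I * (c : ℂ) * (t : ℂ)) := by
      have harg : Complex.I * (j : ℂ) * (t : ℂ)
          = Complex.I * (c : ℂ) * (t : ℂ) + (Real.pi : ℂ) * Complex.I := by
        rw [hteq]; field_simp; ring
      rw [harg, Complex.exp_add, Complex.exp_pi_mul_I]; ring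
    have e4 : (Complex.exp (Complex.I * (j : ℂ) * (t : ℂ))
        - Complex.exp (Complex.I * (c : ℂ) * (t : ℂ))) • E j ζ = 0 := by
      rw [sub_smul, ← e1, ← e2, sub_self]
    rcases smul_eq_zero.mp e4 with hs | hv
    · exfalso
      rw [e3] at hs
      apply Complex.exp_ne_zero (Complex.I * (c : ℂ) * (t : ℂ))
      linear_combination -hs / 2
    · exact hv
  exact ((hE_sum ζ).unique (hasSum_single c (fun j hj => hz j hj))).symm

lemma comm_VV
    (hE_sum : ∀ ξ : H, HasSum (fun n => E n ξ) ξ)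
    (hV_eig : ∀ (t : ℝ) (n : ℤ) (ξ : H), ξ ∈ Set.range ⇑(E n) →
      V t ξ = Complex.exp (Complex.I * (n : ℂ) * (t : ℂ)) • ξ)
    (a b : ℝ) (ξ : H) : V a (V b ξ) = V b (V a ξ) := by
  have key : ∀ a b : ℝ, HasSum
      (fun k : ℤ => (Complex.exp (Complex.I * (k : ℂ) * (a : ℂ))
        * Complex.exp (Complex.I * (k : ℂ) * (b : ℂ))) • E k ξ) (V a (V b ξ)) := by
    intro a b
    have h1 := (V a).hasSum (hasSumV E V hE_sum hV_eig b ξ)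
    have hfun : (fun k : ℤ => V a (Complex.exp (Complex.I * (k : ℂ) * (b : ℂ)) • E k ξ))
        = fun k : ℤ => (Complex.exp (Complex.I * (k : ℂ) * (a : ℂ))
          * Complex.exp (Complex.I * (k : ℂ) * (b : ℂ))) • E k ξ := by
      funext k
      rw [map_smul, hV_eig a k _ ⟨ξ, rfl⟩, smul_smul, mul_comm]
    exact hfun ▸ h1
  have h2 := key a b
  have h3 := key b a
  have hfun : (fun k : ℤ => (Complex.exp (Complex.I * (k : ℂ) * (b : ℂ))
      * Complex.exp (Complex.I * (k : ℂ) * (a : ℂ))) • E k ξ)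
      = fun k : ℤ => (Complex.exp (Complex.I * (k : ℂ) * (a : ℂ))
        * Complex.exp (Complex.I * (k : ℂ) * (b : ℂ))) • E k ξ := by
    funext k; rw [mul_comm]
  exact h2.unique (hfun ▸ h3)

lemma shift_deg
    (hE_idem : ∀ n, IsIdempotentElem (E n))
    (hE_orth : ∀ m n, m ≠ n → E m * E n = 0)
    (hE_sum : ∀ ξ : H, HasSum (fun n => E n ξ) ξ)
    (hV_unitary : ∀ t, V t ∈ unitary (H →L[ℂ] H))
    (hV_eig : ∀ (t : ℝ) (n : ℤ) (ξ : H), ξ ∈ Set.range ⇑(E n) →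
      V t ξ = Complex.exp (Complex.I * (n : ℂ) * (t : ℂ)) • ξ)
    (m : ℤ) (x : H →L[ℂ] H)
    (hx : ∀ t : ℝ, V t * x * star (V t) =
      Complex.exp (Complex.I * (m : ℂ) * (t : ℂ)) • x)
    (k : ℤ) (ξ : H) (hk : ξ ∈ Set.range ⇑(E k)) :
    x ξ ∈ Set.range ⇑(E (k + m)) := by
  apply mem_of_eig E V hE_idem hE_orth hE_sum hV_eig
  intro t
  have hu := (Unitary.mem_iff.mp (hV_unitary t)).1
  have hVx : V t * x = Complex.exp (Complex.I * (m : ℂ) * (t : ℂ)) • (x * V t) := by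
    have := congrArg (fun z => z * V t) (hx t)
    simpa [mul_assoc, hu, smul_mul_assoc] using this
  have h1 : V t (x ξ) = Complex.exp (Complex.I * (m : ℂ) * (t : ℂ)) • x (V t ξ) := by
    have := DFunLike.congr_fun hVx ξ
    simpa [ContinuousLinearMap.mul_apply] using this
  rw [h1, hV_eig t k ξ hk, map_smul, smul_smul, ← Complex.exp_add]
  congr 2
  push_cast; ring

end StmtAux

namespace StmtAux

variable {H HT : Type*}
  [NormedAddCommGroup H] [InnerProductSpace ℂ H] [CompleteSpace H]
  [NormedAddCommGroup HT] [InnerProductSpace ℂ HT] [CompleteSpace HT]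

lemma ext_op2 (P : HilbertTensor H H HT) (E : ℤ → (H →L[ℂ] H))
    (hE_sum : ∀ ξ : H, HasSum (fun n => E n ξ) ξ) {f g : HT →L[ℂ] HT}
    (h : ∀ (k l : ℤ) (ξ η : H),
      f (P.tmul (E k ξ) (E l η)) = g (P.tmul (E k ξ) (E l η))) :
    f = g := by
  apply ext_op P
  intro ξ η
  have hmid : ∀ k : ℤ, f (P.tmul (E k ξ) η) = g (P.tmul (E k ξ) η) := by
    intro k
    have hs : HasSum (fun l : ℤ => P.tmul (E k ξ) (E l η)) (P.tmul (E k ξ) η) :=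
      (P.tmul (E k ξ)).hasSum (hE_sum η)
    have hf := f.hasSum hs
    have hg := g.hasSum hs
    have hfun : (fun l : ℤ => f (P.tmul (E k ξ) (E l η)))
        = fun l : ℤ => g (P.tmul (E k ξ) (E l η)) := funext fun l => h k l ξ η
    exact hf.unique (hfun ▸ hg)
  have hs0 : HasSum (fun k : ℤ => P.tmul.flip η (E k ξ)) (P.tmul.flip η ξ) :=
    (P.tmul.flip η).hasSum (hE_sum ξ)
  simp only [ContinuousLinearMap.flip_apply] at hs0
  have hf := f.hasSum hs0
  have hg := g.hasSum hs0
  have hfun : (fun k : ℤ => f (P.tmul (E k ξ) η))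
      = fun k : ℤ => g (P.tmul (E k ξ) η) := funext hmid
  exact hf.unique (hfun ▸ hg)

end StmtAux

/-- for covariant `x, y` (of degrees `m, n`) one has
`(x ⊗ 1)·(U_κ (1 ⊗ y) U_κ*) = (x ⊗ y)·(V(nκ) ⊗ 1)`, and this operator `z`
satisfies `(V(s) ⊗ V(t)) z (V(s) ⊗ V(t))* = e^{i(ms+nt)} z`. -/
theorem stmt14
    {H HT : Type*}
    [NormedAddCommGroup H] [InnerProductSpace ℂ H] [CompleteSpace H]
    [NormedAddCommGroup HT] [InnerProductSpace ℂ HT] [CompleteSpace HT]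
    (P : HilbertTensor H H HT)
    (E : ℤ → (H →L[ℂ] H))
    (hE_idem : ∀ n, IsIdempotentElem (E n))
    (hE_sa : ∀ n, IsSelfAdjoint (E n))
    (hE_orth : ∀ m n, m ≠ n → E m * E n = 0)
    (hE_sum : ∀ ξ : H, HasSum (fun n => E n ξ) ξ)
    (V : ℝ → (H →L[ℂ] H))
    (hV_unitary : ∀ t, V t ∈ unitary (H →L[ℂ] H))
    (hV_eig : ∀ (t : ℝ) (n : ℤ) (ξ : H), ξ ∈ Set.range ⇑(E n) →
      V t ξ = Complex.exp (Complex.I * (n : ℂ) * (t : ℂ)) • ξ)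
    (κ : ℝ) (U : HT →L[ℂ] HT)
    (hU_unitary : U ∈ unitary (HT →L[ℂ] HT))
    (hU_eig : ∀ (m n : ℤ) (ξ η : H), ξ ∈ Set.range ⇑(E m) → η ∈ Set.range ⇑(E n) →
      U (P.tmul ξ η) = Complex.exp (Complex.I * (κ : ℂ) * (m : ℂ) * (n : ℂ)) • P.tmul ξ η)
    (m n : ℤ) (x y : H →L[ℂ] H)
    (hx : ∀ t : ℝ, V t * x * star (V t) =
      Complex.exp (Complex.I * (m : ℂ) * (t : ℂ)) • x)
    (hy : ∀ t : ℝ, V t * y * star (V t) =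
      Complex.exp (Complex.I * (n : ℂ) * (t : ℂ)) • y) :
    P.map x 1 * (U * P.map 1 y * star U) = P.map x y * P.map (V ((n : ℝ) * κ)) 1 ∧
    (∀ s t : ℝ,
      P.map (V s) (V t) * (P.map x 1 * (U * P.map 1 y * star U)) *
          star (P.map (V s) (V t))
        = Complex.exp (Complex.I * ((m : ℂ) * (s : ℂ) + (n : ℂ) * (t : ℂ))) •
            (P.map x 1 * (U * P.map 1 y * star U))) := by
  classical
  have eq1 : P.map x 1 * (U * P.map 1 y * star U)
      = P.map x y * P.map (V ((n : ℝ) * κ)) 1 := by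
    apply StmtAux.ext_op2 P E hE_sum
    intro k l ξ₀ η₀
    set ξ : H := E k ξ₀ with hξ
    set η : H := E l η₀ with hη
    have hk : ξ ∈ Set.range ⇑(E k) := ⟨ξ₀, rfl⟩
    have hl : η ∈ Set.range ⇑(E l) := ⟨η₀, rfl⟩
    have hyd : y η ∈ Set.range ⇑(E (l + n)) :=
      StmtAux.shift_deg E V hE_idem hE_orth hE_sum hV_unitary hV_eig n y hy l η hl
    have hsU : star U (P.tmul ξ η)
        = (Complex.exp (Complex.I * (κ : ℂ) * (k : ℂ) * (l : ℂ)))⁻¹ • P.tmul ξ η :=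
      StmtAux.star_apply_eig hU_unitary (Complex.exp_ne_zero _) (hU_eig k l ξ η hk hl)
    simp only [ContinuousLinearMap.mul_apply]
    rw [hsU, map_smul, P.map_tmul, ContinuousLinearMap.one_apply, map_smul,
      hU_eig k (l + n) ξ (y η) hk hyd, map_smul, map_smul, P.map_tmul,
      ContinuousLinearMap.one_apply, P.map_tmul, hV_eig ((n : ℝ) * κ) k ξ hk,
      StmtAux.tmul_smul_left, map_smul, P.map_tmul, smul_smul]
    simp only [ContinuousLinearMap.one_apply]
    congr 1
    rw [← Complex.exp_neg, ← Complex.exp_add]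
    congr 1
    push_cast
    ring
  refine ⟨eq1, ?_⟩
  intro s t
  rw [eq1, StmtAux.map_star' P]
  set w := V ((n : ℝ) * κ) with hw
  have hcVV : V s * w = w * V s := by
    ext ξ
    simp only [ContinuousLinearMap.mul_apply]
    exact StmtAux.comm_VV E V hE_sum hV_eig s ((n : ℝ) * κ) ξ
  have hsw : star (V s) * w = w * star (V s) :=
    StmtAux.star_comm_of_comm (hV_unitary s) hcVV
  rw [StmtAux.map_mul' P x y w 1, StmtAux.map_mul' P, StmtAux.map_mul' P]
  have hA : V s * (x * w) * star (V s)
      = Complex.exp (Complex.I * (m : ℂ) * (s : ℂ)) • (x * w) := by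
    calc V s * (x * w) * star (V s)
        = V s * x * (w * star (V s)) := by simp only [mul_assoc]
      _ = V s * x * (star (V s) * w) := by rw [hsw]
      _ = (V s * x * star (V s)) * w := by simp only [mul_assoc]
      _ = Complex.exp (Complex.I * (m : ℂ) * (s : ℂ)) • (x * w) := by
          rw [hx s, smul_mul_assoc]
  have hB : V t * (y * 1) * star (V t)
      = Complex.exp (Complex.I * (n : ℂ) * (t : ℂ)) • (y * 1) := by
    rw [mul_one]; exact hy t
  rw [hA, hB, StmtAux.map_smul' P]
  rw [← Complex.exp_add]
  have harg : Complex.I * (m : ℂ) * (s : ℂ) + Complex.I * (n : ℂ) * (t : ℂ)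
      = Complex.I * ((m : ℂ) * (s : ℂ) + (n : ℂ) * (t : ℂ)) := by ring
  rw [harg]
end
end

section
/- Let Ω ∈ H with (E 0) Ω = Ω, let κ ∈ ℝ, and let M₋, M₊ be von Neumann algebras on H such that every element of M₋ commutes with every element of M₊, and V(t) M₋ V(t)* = M₋ and V(t) M₊ V(t)* = M₊ for all t ∈ ℝ. Assume Ω ⊗ Ω is cyclic both for the von Neumann algebra generated by {x ⊗ 1 : x ∈ M₋} ∪ {1 ⊗ y : y ∈ M₊} and for the von Neumann algebra generated by {x ⊗ 1 : x ∈ M₊} ∪ {1 ⊗ y : y ∈ M₋}. Then every element of the von Neumann algebra M_κ generated by {x ⊗ 1 : x ∈ M₋} ∪ {U_κ (1 ⊗ y) U_κ* : y ∈ M₊} commutes with every element of the von Neumann algebra M¹_κ generated by {U_κ (x ⊗ 1) U_κ* : x ∈ M₊} ∪ {1 ⊗ y : y ∈ M₋}, and Ω ⊗ Ω is cyclic and separating for M_κ. -/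
noncomputable section

section Aux

variable {H HT : Type*}
    [NormedAddCommGroup H] [InnerProductSpace ℂ H] [CompleteSpace H]
    [NormedAddCommGroup HT] [InnerProductSpace ℂ HT] [CompleteSpace HT]
    (P : HilbertTensor H H HT)

/-- Two operators agreeing on elementary tensors agree. -/
lemma HilbertTensor.ext_tmul {f g : HT →L[ℂ] HT}
    (h : ∀ ξ η, f (P.tmul ξ η) = g (P.tmul ξ η)) : f = g := by
  refine ContinuousLinearMap.ext_on P.dense_span ?_
  rintro z ⟨ξ, η, rfl⟩
  exact h ξ η

lemma HilbertTensor.map_mul_map (a b : H →L[ℂ] H) :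
    P.map a 1 * P.map 1 b = P.map a b := by
  refine P.ext_tmul fun ξ η => ?_
  simp [ContinuousLinearMap.mul_apply, P.map_tmul]

lemma HilbertTensor.map_mul_map' (a b : H →L[ℂ] H) :
    P.map 1 b * P.map a 1 = P.map a b := by
  refine P.ext_tmul fun ξ η => ?_
  simp [ContinuousLinearMap.mul_apply, P.map_tmul]

lemma HilbertTensor.map_comm (a b : H →L[ℂ] H) :
    P.map a 1 * P.map 1 b = P.map 1 b * P.map a 1 := by
  rw [P.map_mul_map, P.map_mul_map']

/-- Adjoint of `a ⊗ b` is `a* ⊗ b*`. -/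
lemma HilbertTensor.map_adjoint (a b : H →L[ℂ] H) :
    ContinuousLinearMap.adjoint (P.map a b)
      = P.map (ContinuousLinearMap.adjoint a) (ContinuousLinearMap.adjoint b) := by
  symm
  rw [ContinuousLinearMap.eq_adjoint_iff]
  -- step 1: elementary-elementary, in the transposed form
  have step1 : ∀ (ξ' η' ξ η : H),
      (inner ℂ (P.tmul ξ' η')
        (P.map (ContinuousLinearMap.adjoint a) (ContinuousLinearMap.adjoint b)
          (P.tmul ξ η)) : ℂ)
      = inner ℂ (P.map a b (P.tmul ξ' η')) (P.tmul ξ η) := by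
    intro ξ' η' ξ η
    rw [P.map_tmul, P.map_tmul, P.inner_tmul, P.inner_tmul,
      ContinuousLinearMap.adjoint_inner_right, ContinuousLinearMap.adjoint_inner_right]
  -- step 2: elementary y, all x (left-pairing form)
  have step2 : ∀ (ξ' η' : H) (x : HT),
      (inner ℂ (P.tmul ξ' η')
        (P.map (ContinuousLinearMap.adjoint a) (ContinuousLinearMap.adjoint b) x) : ℂ)
      = inner ℂ (P.map a b (P.tmul ξ' η')) x := by
    intro ξ' η'
    have hfg : ((innerSL ℂ (P.tmul ξ' η')).comp
          (P.map (ContinuousLinearMap.adjoint a) (ContinuousLinearMap.adjoint b))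
          : HT →L[ℂ] ℂ)
        = innerSL ℂ (P.map a b (P.tmul ξ' η')) := by
      refine ContinuousLinearMap.ext_on P.dense_span ?_
      rintro z ⟨ξ, η, rfl⟩
      simpa only [innerSL_apply_apply, ContinuousLinearMap.comp_apply] using step1 ξ' η' ξ η
    intro x
    have := congrFun (congrArg (fun (f : HT →L[ℂ] ℂ) => (f : HT → ℂ)) hfg) x
    simpa only [innerSL_apply_apply, ContinuousLinearMap.comp_apply] using this
  -- step 3: all x, all y
  intro x y
  have hfg : (innerSL ℂ (P.map (ContinuousLinearMap.adjoint a)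
        (ContinuousLinearMap.adjoint b) x) : HT →L[ℂ] ℂ)
      = (innerSL ℂ x).comp (P.map a b) := by
    refine ContinuousLinearMap.ext_on P.dense_span ?_
    rintro z ⟨ξ, η, rfl⟩
    simp only [innerSL_apply_apply, ContinuousLinearMap.comp_apply]
    rw [← inner_conj_symm, step2 ξ η x, inner_conj_symm]
  have := congrFun (congrArg (fun (f : HT →L[ℂ] ℂ) => (f : HT → ℂ)) hfg) y
  simpa only [innerSL_apply_apply, ContinuousLinearMap.comp_apply] using this

/-- Extension along a resolution of the identity. -/
lemma ext_of_hasSum {X : Type*} [NormedAddCommGroup X] [NormedSpace ℂ X]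
    {E : ℤ → (H →L[ℂ] H)} (hE_sum : ∀ ξ : H, HasSum (fun n => E n ξ) ξ)
    {f g : H →L[ℂ] X} (h : ∀ (n : ℤ) (ξ : H), f (E n ξ) = g (E n ξ)) : f = g := by
  ext ξ
  have h1 : HasSum (fun n => f (E n ξ)) (f ξ) := f.hasSum (hE_sum ξ)
  have h2 : HasSum (fun n => g (E n ξ)) (g ξ) := g.hasSum (hE_sum ξ)
  have h1' : HasSum (fun n => g (E n ξ)) (f ξ) := by
    simpa only [h] using h1
  exact h1'.unique h2

/-- Two operators agreeing on tensors whose right leg lies in some `E n` range agree. -/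
lemma HilbertTensor.ext_tmul_right {E : ℤ → (H →L[ℂ] H)}
    (hE_sum : ∀ ξ : H, HasSum (fun n => E n ξ) ξ) {f g : HT →L[ℂ] HT}
    (h : ∀ (n : ℤ) (ξ η : H), f (P.tmul ξ (E n η)) = g (P.tmul ξ (E n η))) : f = g := by
  refine P.ext_tmul fun ξ η => ?_
  have h1 : HasSum (fun n => f (P.tmul ξ (E n η))) (f (P.tmul ξ η)) :=
    f.hasSum ((P.tmul ξ).hasSum (hE_sum η))
  have h2 : HasSum (fun n => g (P.tmul ξ (E n η))) (g (P.tmul ξ η)) :=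
    g.hasSum ((P.tmul ξ).hasSum (hE_sum η))
  have h1' : HasSum (fun n => g (P.tmul ξ (E n η))) (f (P.tmul ξ η)) := by
    simpa only [h] using h1
  exact h1'.unique h2

/-- Two operators agreeing on tensors whose left leg lies in some `E n` range agree. -/
lemma HilbertTensor.ext_tmul_left {E : ℤ → (H →L[ℂ] H)}
    (hE_sum : ∀ ξ : H, HasSum (fun n => E n ξ) ξ) {f g : HT →L[ℂ] HT}
    (h : ∀ (n : ℤ) (ξ η : H), f (P.tmul (E n ξ) η) = g (P.tmul (E n ξ) η)) : f = g := by
  refine P.ext_tmul fun ξ η => ?_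
  have hsum : HasSum (fun n => P.tmul (E n ξ) η) (P.tmul ξ η) :=
    (P.tmul.flip η).hasSum (hE_sum ξ)
  have h1 : HasSum (fun n => f (P.tmul (E n ξ) η)) (f (P.tmul ξ η)) := f.hasSum hsum
  have h2 : HasSum (fun n => g (P.tmul (E n ξ) η)) (g (P.tmul ξ η)) := g.hasSum hsum
  have h1' : HasSum (fun n => g (P.tmul (E n ξ) η)) (f (P.tmul ξ η)) := by
    simpa only [h] using h1
  exact h1'.unique h2

/-- Elementwise commutation of generating sets passes to the generated vN algebras. -/
lemma genVN_comm {M : Type*} [Monoid M] {S T : Set M}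
    (h : ∀ s ∈ S, ∀ t ∈ T, s * t = t * s) :
    ∀ z ∈ genVN S, ∀ w ∈ genVN T, z * w = w * z := by
  have hST : S ⊆ Set.centralizer T := fun s hs t ht => (h s hs t ht).symm
  have h1 : genVN S ⊆ Set.centralizer T := by
    have h2 := Set.centralizer_subset (Set.centralizer_subset hST)
    rw [Set.centralizer_centralizer_centralizer] at h2
    exact h2
  intro z hz w hw
  exact hw z (h1 hz)

/-- If a self-adjoint set `S` of operators leaves a set `G ∋ Φ` of vectors invariant,
and `Φ` is cyclic for `genVN S`, then the span of `G` is dense. -/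
lemma dense_span_of_cyclic {S : Set (HT →L[ℂ] HT)}
    (hS_star : ∀ s ∈ S, ContinuousLinearMap.adjoint s ∈ S)
    {G : Set HT} (hG_inv : ∀ s ∈ S, ∀ v ∈ G, s v ∈ G) {Φ : HT} (hΦ : Φ ∈ G)
    (hcyc : Dense ((fun z : HT →L[ℂ] HT => z Φ) '' genVN S)) :
    Dense (↑(Submodule.span ℂ G) : Set HT) := by
  set K : Submodule ℂ HT := Submodule.span ℂ G with hK
  set Kc : Submodule ℂ HT := K.topologicalClosure with hKc
  have hKc_closed : IsClosed (Kc : Set HT) := K.isClosed_topologicalClosure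
  haveI : CompleteSpace Kc := hKc_closed.completeSpace_coe
  -- invariance of the span and its closure
  have hspan_inv : ∀ s ∈ S, ∀ v ∈ K, s v ∈ K := by
    intro s hs v hv
    refine Submodule.span_induction ?_ ?_ ?_ ?_ hv
    · intro x hx; exact Submodule.subset_span (hG_inv s hs x hx)
    · simpa using (Submodule.zero_mem K)
    · intro x y _ _ hx hy; simpa [map_add] using K.add_mem hx hy
    · intro c x _ hx; simpa [map_smul] using K.smul_mem c hx
  have hKc_inv : ∀ s ∈ S, ∀ v ∈ Kc, s v ∈ Kc := by
    intro s hs v hv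
    have hsub : (K : Set HT) ⊆ s ⁻¹' (Kc : Set HT) := by
      intro x hx
      exact K.le_topologicalClosure (hspan_inv s hs x hx)
    have : closure (K : Set HT) ⊆ s ⁻¹' (Kc : Set HT) :=
      closure_minimal hsub (hKc_closed.preimage s.continuous)
    exact this hv
  -- the orthogonal projection onto Kc
  set p : HT →L[ℂ] HT := Kc.subtypeL.comp (Submodule.orthogonalProjectionOnto Kc) with hp
  have hp_apply : ∀ v : HT, p v = (Submodule.orthogonalProjectionOnto Kc v : HT) := fun v => rfl
  have hp_mem : ∀ v : HT, p v ∈ Kc := fun v => (Submodule.orthogonalProjectionOnto Kc v).2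
  have hp_id : ∀ v ∈ Kc, p v = v := by
    intro v hv; rw [hp_apply]; exact Submodule.starProjection_eq_self_iff.2 hv
  have hp_zero : ∀ v ∈ Kcᗮ, p v = 0 := by
    intro v hv
    rw [hp_apply, Submodule.orthogonalProjectionOnto_apply_of_mem_orthogonal hv,
      Submodule.coe_zero]
  -- p commutes with S
  have hp_comm : p ∈ Set.centralizer S := by
    intro s hs
    ext ζ
    have hdec : ζ - p ζ ∈ Kcᗮ := by
      rw [hp_apply]; exact Submodule.sub_starProjection_mem_orthogonal ζ
    have hsh : s (ζ - p ζ) ∈ Kcᗮ := by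
      rw [Submodule.mem_orthogonal]
      intro u hu
      rw [← ContinuousLinearMap.adjoint_inner_left]
      exact (Submodule.mem_orthogonal _ _).1 hdec _
        (hKc_inv _ (hS_star s hs) u hu)
    have hζ : s ζ = s (p ζ) + s (ζ - p ζ) := by
      rw [← map_add]; congr 1; abel
    calc (s * p) ζ = s (p ζ) := rfl
      _ = p (s (p ζ)) + p (s (ζ - p ζ)) := by
          rw [hp_id _ (hKc_inv s hs _ (hp_mem ζ)), hp_zero _ hsh, add_zero]
      _ = p (s ζ) := by rw [← map_add, ← hζ]
      _ = (p * s) ζ := rfl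
  -- image of the generated von Neumann algebra lands in Kc
  have hΦKc : Φ ∈ Kc := K.le_topologicalClosure (Submodule.subset_span hΦ)
  have himg : ((fun z : HT →L[ℂ] HT => z Φ) '' genVN S) ⊆ (Kc : Set HT) := by
    rintro _ ⟨z, hz, rfl⟩
    have hcomm : p * z = z * p := hz p hp_comm
    have : z Φ = p (z Φ) := by
      conv_lhs => rw [← hp_id Φ hΦKc]
      have := congrFun (congrArg (fun (f : HT →L[ℂ] HT) => (f : HT → HT)) hcomm) Φ
      exact (congrArg _ rfl).trans this.symm
    show z Φ ∈ (Kc : Set HT)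
    rw [this]; exact hp_mem _
  have hKc_dense : Dense (Kc : Set HT) := hcyc.mono himg
  rw [hKc, Submodule.topologicalClosure_coe] at hKc_dense
  exact dense_closure.mp hKc_dense

end Aux

/-- under mutual commutation of `M₋, M₊`, their `V`-invariance,
`(E 0)Ω = Ω` and the two cyclicity hypotheses, `M_κ` commutes with `M¹_κ` and
`Ω ⊗ Ω` is cyclic and separating for `M_κ`. -/
theorem stmt16
    {H HT : Type*}
    [NormedAddCommGroup H] [InnerProductSpace ℂ H] [CompleteSpace H]
    [NormedAddCommGroup HT] [InnerProductSpace ℂ HT] [CompleteSpace HT]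
    (P : HilbertTensor H H HT)
    (E : ℤ → (H →L[ℂ] H))
    (hE_idem : ∀ n, IsIdempotentElem (E n))
    (hE_sa : ∀ n, IsSelfAdjoint (E n))
    (hE_orth : ∀ m n, m ≠ n → E m * E n = 0)
    (hE_sum : ∀ ξ : H, HasSum (fun n => E n ξ) ξ)
    (V : ℝ → (H →L[ℂ] H))
    (hV_unitary : ∀ t, V t ∈ unitary (H →L[ℂ] H))
    (hV_eig : ∀ (t : ℝ) (n : ℤ) (ξ : H), ξ ∈ Set.range ⇑(E n) →
      V t ξ = Complex.exp (Complex.I * (n : ℂ) * (t : ℂ)) • ξ)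
    (κ : ℝ) (U : HT →L[ℂ] HT)
    (hU_unitary : U ∈ unitary (HT →L[ℂ] HT))
    (hU_eig : ∀ (m n : ℤ) (ξ η : H), ξ ∈ Set.range ⇑(E m) → η ∈ Set.range ⇑(E n) →
      U (P.tmul ξ η) = Complex.exp (Complex.I * (κ : ℂ) * (m : ℂ) * (n : ℂ)) • P.tmul ξ η)
    (Ω : H) (hΩ : E 0 Ω = Ω)
    (Mm Mp : VonNeumannAlgebra H)
    (hMcomm : ∀ x ∈ Mm, ∀ y ∈ Mp, x * y = y * x)
    (hMm_inv : ∀ t : ℝ, (fun x : H →L[ℂ] H => V t * x * star (V t)) ''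
      (Mm : Set (H →L[ℂ] H)) = (Mm : Set (H →L[ℂ] H)))
    (hMp_inv : ∀ t : ℝ, (fun x : H →L[ℂ] H => V t * x * star (V t)) ''
      (Mp : Set (H →L[ℂ] H)) = (Mp : Set (H →L[ℂ] H)))
    (hcyc₁ : Dense ((fun z : HT →L[ℂ] HT => z (P.tmul Ω Ω)) ''
      genVN ((fun x : H →L[ℂ] H => P.map x 1) '' (Mm : Set (H →L[ℂ] H)) ∪
             (fun y : H →L[ℂ] H => P.map 1 y) '' (Mp : Set (H →L[ℂ] H)))))
    (hcyc₂ : Dense ((fun z : HT →L[ℂ] HT => z (P.tmul Ω Ω)) ''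
      genVN ((fun x : H →L[ℂ] H => P.map x 1) '' (Mp : Set (H →L[ℂ] H)) ∪
             (fun y : H →L[ℂ] H => P.map 1 y) '' (Mm : Set (H →L[ℂ] H))))) :
    (∀ z ∈ genVN ((fun x : H →L[ℂ] H => P.map x 1) '' (Mm : Set (H →L[ℂ] H)) ∪
        (fun y : H →L[ℂ] H => U * P.map 1 y * star U) '' (Mp : Set (H →L[ℂ] H))),
      ∀ w ∈ genVN ((fun x : H →L[ℂ] H => U * P.map x 1 * star U) ''
          (Mp : Set (H →L[ℂ] H)) ∪
        (fun y : H →L[ℂ] H => P.map 1 y) '' (Mm : Set (H →L[ℂ] H))),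
        z * w = w * z) ∧
    Dense ((fun z : HT →L[ℂ] HT => z (P.tmul Ω Ω)) ''
      genVN ((fun x : H →L[ℂ] H => P.map x 1) '' (Mm : Set (H →L[ℂ] H)) ∪
        (fun y : H →L[ℂ] H => U * P.map 1 y * star U) '' (Mp : Set (H →L[ℂ] H)))) ∧
    (∀ z ∈ genVN ((fun x : H →L[ℂ] H => P.map x 1) '' (Mm : Set (H →L[ℂ] H)) ∪
        (fun y : H →L[ℂ] H => U * P.map 1 y * star U) '' (Mp : Set (H →L[ℂ] H))),
      z (P.tmul Ω Ω) = 0 → z = 0) := by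
  have hU1 : star U * U = 1 := (Unitary.mem_iff.mp hU_unitary).1
  have hV2 : ∀ t, V t * star (V t) = 1 := fun t => (Unitary.mem_iff.mp (hV_unitary t)).2
  have hΩ0 : Ω ∈ Set.range ⇑(E 0) := ⟨Ω, hΩ⟩
  -- V 0 = 1
  have hV0 : V 0 = 1 := by
    refine ext_of_hasSum hE_sum fun n ξ => ?_
    rw [hV_eig 0 n _ ⟨ξ, rfl⟩]
    simp
  -- U on tensors with right leg in an eigenspace
  have hUright : ∀ (n : ℤ) (η : H), η ∈ Set.range ⇑(E n) →
      ∀ ξ : H, U (P.tmul ξ η) = P.tmul (V (κ * (n : ℤ)) ξ) η := by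
    intro n η hη
    have key : U.comp (P.tmul.flip η) = (P.tmul.flip η).comp (V (κ * (n : ℤ))) := by
      refine ext_of_hasSum hE_sum fun m ξ => ?_
      have hm : E m ξ ∈ Set.range ⇑(E m) := ⟨ξ, rfl⟩
      simp only [ContinuousLinearMap.comp_apply, ContinuousLinearMap.flip_apply]
      rw [hU_eig m n _ η hm hη, hV_eig (κ * (n : ℤ)) m _ hm, map_smul]
      congr 2
      push_cast
      ring
    intro ξ
    have := congrFun (congrArg (fun (f : H →L[ℂ] HT) => (f : H → HT)) key) ξ
    simpa only [ContinuousLinearMap.comp_apply, ContinuousLinearMap.flip_apply] using this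
  -- U on tensors with left leg in an eigenspace
  have hUleft : ∀ (m : ℤ) (ξ : H), ξ ∈ Set.range ⇑(E m) →
      ∀ η : H, U (P.tmul ξ η) = P.tmul ξ (V (κ * (m : ℤ)) η) := by
    intro m ξ hξ
    have key : U.comp (P.tmul ξ) = (P.tmul ξ).comp (V (κ * (m : ℤ))) := by
      refine ext_of_hasSum hE_sum fun n η => ?_
      have hn : E n η ∈ Set.range ⇑(E n) := ⟨η, rfl⟩
      simp only [ContinuousLinearMap.comp_apply]
      rw [hU_eig m n ξ _ hξ hn, hV_eig (κ * (m : ℤ)) n _ hn, map_smul]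
      congr 2
      push_cast
      ring
    intro η
    have := congrFun (congrArg (fun (f : H →L[ℂ] HT) => (f : H → HT)) key) η
    simpa only [ContinuousLinearMap.comp_apply] using this
  -- star U versions
  have hsUright : ∀ (n : ℤ) (η : H), η ∈ Set.range ⇑(E n) →
      ∀ ξ : H, star U (P.tmul ξ η) = P.tmul (star (V (κ * (n : ℤ))) ξ) η := by
    intro n η hη ξ
    have h1 : V (κ * (n : ℤ)) (star (V (κ * (n : ℤ))) ξ) = ξ := by
      have := congrFun (congrArg (fun (f : H →L[ℂ] H) => (f : H → H)) (hV2 (κ * (n : ℤ)))) ξ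
      simpa only [ContinuousLinearMap.mul_apply, ContinuousLinearMap.one_apply] using this
    conv_lhs => rw [← h1, ← hUright n η hη]
    have := congrFun (congrArg (fun (f : HT →L[ℂ] HT) => (f : HT → HT)) hU1)
      (P.tmul (star (V (κ * (n : ℤ))) ξ) η)
    simpa only [ContinuousLinearMap.mul_apply, ContinuousLinearMap.one_apply] using this
  have hsUleft : ∀ (m : ℤ) (ξ : H), ξ ∈ Set.range ⇑(E m) →
      ∀ η : H, star U (P.tmul ξ η) = P.tmul ξ (star (V (κ * (m : ℤ))) η) := by
    intro m ξ hξ η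
    have h1 : V (κ * (m : ℤ)) (star (V (κ * (m : ℤ))) η) = η := by
      have := congrFun (congrArg (fun (f : H →L[ℂ] H) => (f : H → H)) (hV2 (κ * (m : ℤ)))) η
      simpa only [ContinuousLinearMap.mul_apply, ContinuousLinearMap.one_apply] using this
    conv_lhs => rw [← h1, ← hUleft m ξ hξ]
    have := congrFun (congrArg (fun (f : HT →L[ℂ] HT) => (f : HT → HT)) hU1)
      (P.tmul ξ (star (V (κ * (m : ℤ))) η))
    simpa only [ContinuousLinearMap.mul_apply, ContinuousLinearMap.one_apply] using this
  -- conjugation formulas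
  have hconjR : ∀ (a : H →L[ℂ] H) (n : ℤ) (η : H), η ∈ Set.range ⇑(E n) → ∀ ξ : H,
      (U * P.map a 1 * star U) (P.tmul ξ η)
        = P.tmul ((V (κ * (n : ℤ)) * a * star (V (κ * (n : ℤ)))) ξ) η := by
    intro a n η hη ξ
    show U (P.map a 1 (star U (P.tmul ξ η))) = _
    rw [hsUright n η hη ξ, P.map_tmul, ContinuousLinearMap.one_apply,
      hUright n η hη]
    rfl
  have hconjL : ∀ (b : H →L[ℂ] H) (m : ℤ) (ξ : H), ξ ∈ Set.range ⇑(E m) → ∀ η : H,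
      (U * P.map 1 b * star U) (P.tmul ξ η)
        = P.tmul ξ ((V (κ * (m : ℤ)) * b * star (V (κ * (m : ℤ)))) η) := by
    intro b m ξ hξ η
    show U (P.map 1 b (star U (P.tmul ξ η))) = _
    rw [hsUleft m ξ hξ η, P.map_tmul, ContinuousLinearMap.one_apply,
      hUleft m ξ hξ]
    rfl
  -- U fixes tensors with Ω in one leg
  have hκ0 : κ * ((0 : ℤ) : ℝ) = 0 := by norm_num
  have hUfixL : ∀ η : H, U (P.tmul Ω η) = P.tmul Ω η := by
    intro η
    rw [hUleft 0 Ω hΩ0 η, hκ0, hV0, ContinuousLinearMap.one_apply]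
  have hUfixR : ∀ ξ : H, U (P.tmul ξ Ω) = P.tmul ξ Ω := by
    intro ξ
    rw [hUright 0 Ω hΩ0 ξ, hκ0, hV0, ContinuousLinearMap.one_apply]
  have hsUΦ : star U (P.tmul Ω Ω) = P.tmul Ω Ω := by
    conv_lhs => rw [← hUfixL Ω]
    have := congrFun (congrArg (fun (f : HT →L[ℂ] HT) => (f : HT → HT)) hU1) (P.tmul Ω Ω)
    simpa only [ContinuousLinearMap.mul_apply, ContinuousLinearMap.one_apply] using this
  -- invariance of Mp under Ad V(t)
  have hMpV : ∀ (t : ℝ), ∀ x ∈ (Mp : Set (H →L[ℂ] H)),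
      V t * x * star (V t) ∈ (Mp : Set (H →L[ℂ] H)) := by
    intro t x hx
    rw [← hMp_inv t]
    exact ⟨x, hx, rfl⟩
  -- conjugation is multiplicative
  have hconj_mul : ∀ A B : HT →L[ℂ] HT,
      (U * A * star U) * (U * B * star U) = U * (A * B) * star U := by
    intro A B
    simp only [mul_assoc]
    rw [← mul_assoc (star U) U (B * star U), hU1, one_mul]
  -- elementwise commutation of the two generating sets
  have hcomAB : ∀ s ∈ ((fun x : H →L[ℂ] H => P.map x 1) '' (Mm : Set (H →L[ℂ] H)) ∪
        (fun y : H →L[ℂ] H => U * P.map 1 y * star U) '' (Mp : Set (H →L[ℂ] H))),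
      ∀ t ∈ ((fun x : H →L[ℂ] H => U * P.map x 1 * star U) '' (Mp : Set (H →L[ℂ] H)) ∪
        (fun y : H →L[ℂ] H => P.map 1 y) '' (Mm : Set (H →L[ℂ] H))),
      s * t = t * s := by
    rintro s (⟨x, hx, rfl⟩ | ⟨y, hy, rfl⟩) t (⟨x', hx', rfl⟩ | ⟨y', hy', rfl⟩)
    · -- map x 1 vs U (map x' 1) U*
      refine P.ext_tmul_right hE_sum fun n ξ η => ?_
      have hn : E n η ∈ Set.range ⇑(E n) := ⟨η, rfl⟩
      have hW : V (κ * (n : ℤ)) * x' * star (V (κ * (n : ℤ))) ∈ (Mp : Set (H →L[ℂ] H)) :=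
        hMpV _ x' hx'
      have hcm := hMcomm x hx _ hW
      show P.map x 1 ((U * P.map x' 1 * star U) (P.tmul ξ (E n η)))
        = (U * P.map x' 1 * star U) (P.map x 1 (P.tmul ξ (E n η)))
      rw [hconjR x' n _ hn ξ, P.map_tmul, P.map_tmul, ContinuousLinearMap.one_apply,
        hconjR x' n _ hn]
      have hxW : x ((V (κ * (n : ℤ)) * x' * star (V (κ * (n : ℤ)))) ξ)
          = (V (κ * (n : ℤ)) * x' * star (V (κ * (n : ℤ)))) (x ξ) := by
        calc x ((V (κ * (n : ℤ)) * x' * star (V (κ * (n : ℤ)))) ξ)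
            = (x * (V (κ * (n : ℤ)) * x' * star (V (κ * (n : ℤ))))) ξ := rfl
          _ = ((V (κ * (n : ℤ)) * x' * star (V (κ * (n : ℤ)))) * x) ξ := by rw [hcm]
          _ = _ := rfl
      rw [hxW]
    · -- map x 1 vs map 1 y'
      exact P.map_comm x y'
    · -- U(map 1 y)U* vs U(map x' 1)U*
      rw [hconj_mul, hconj_mul, P.map_mul_map', P.map_mul_map]
    · -- U(map 1 y)U* vs map 1 y'
      refine P.ext_tmul_left hE_sum fun m ξ η => ?_
      have hm : E m ξ ∈ Set.range ⇑(E m) := ⟨ξ, rfl⟩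
      have hW : V (κ * (m : ℤ)) * y * star (V (κ * (m : ℤ))) ∈ (Mp : Set (H →L[ℂ] H)) :=
        hMpV _ y hy
      have hcm := hMcomm y' hy' _ hW
      show (U * P.map 1 y * star U) (P.map 1 y' (P.tmul (E m ξ) η))
        = P.map 1 y' ((U * P.map 1 y * star U) (P.tmul (E m ξ) η))
      rw [P.map_tmul, ContinuousLinearMap.one_apply, hconjL y m _ hm,
        hconjL y m _ hm, P.map_tmul, ContinuousLinearMap.one_apply]
      have hyW : (V (κ * (m : ℤ)) * y * star (V (κ * (m : ℤ)))) (y' η)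
          = y' ((V (κ * (m : ℤ)) * y * star (V (κ * (m : ℤ)))) η) := by
        calc (V (κ * (m : ℤ)) * y * star (V (κ * (m : ℤ)))) (y' η)
            = ((V (κ * (m : ℤ)) * y * star (V (κ * (m : ℤ)))) * y') η := rfl
          _ = (y' * (V (κ * (m : ℤ)) * y * star (V (κ * (m : ℤ))))) η := by rw [← hcm]
          _ = _ := rfl
      rw [hyW]
  have hcomm1 := genVN_comm hcomAB
  have hadj1 : ContinuousLinearMap.adjoint (1 : H →L[ℂ] H) = 1 := by
    rw [← ContinuousLinearMap.star_eq_adjoint, star_one]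
  -- density of the span of product vectors, from the cyclicity hypotheses
  have key : ∀ (N₁ N₂ : VonNeumannAlgebra H),
      Dense ((fun z : HT →L[ℂ] HT => z (P.tmul Ω Ω)) ''
        genVN ((fun x : H →L[ℂ] H => P.map x 1) '' (N₁ : Set (H →L[ℂ] H)) ∪
               (fun y : H →L[ℂ] H => P.map 1 y) '' (N₂ : Set (H →L[ℂ] H)))) →
      Dense (↑(Submodule.span ℂ {z : HT | ∃ x ∈ (N₁ : Set (H →L[ℂ] H)),
        ∃ y ∈ (N₂ : Set (H →L[ℂ] H)), z = P.tmul (x Ω) (y Ω)}) : Set HT) := by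
    intro N₁ N₂ hcyc
    refine dense_span_of_cyclic ?_ ?_ ?_ hcyc
    · rintro s (⟨x, hx, rfl⟩ | ⟨y, hy, rfl⟩)
      · refine Or.inl ⟨ContinuousLinearMap.adjoint x, ?_, ?_⟩
        · rw [← ContinuousLinearMap.star_eq_adjoint]; exact star_mem hx
        · rw [P.map_adjoint, hadj1]
      · refine Or.inr ⟨ContinuousLinearMap.adjoint y, ?_, ?_⟩
        · rw [← ContinuousLinearMap.star_eq_adjoint]; exact star_mem hy
        · rw [P.map_adjoint, hadj1]
    · rintro s (⟨x', hx', rfl⟩ | ⟨y', hy', rfl⟩) v ⟨x, hx, y, hy, rfl⟩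
      · exact ⟨x' * x, mul_mem hx' hx, y, hy, by rw [P.map_tmul]; rfl⟩
      · exact ⟨x, hx, y' * y, mul_mem hy' hy, by rw [P.map_tmul]; rfl⟩
    · exact ⟨1, one_mem N₁, 1, one_mem N₂, rfl⟩
  have hd₁ := key Mm Mp hcyc₁
  have hd₂ := key Mp Mm hcyc₂
  -- generator values on Ω ⊗ Ω
  have hval₁ : ∀ (x y : H →L[ℂ] H),
      (P.map x 1 * (U * P.map 1 y * star U)) (P.tmul Ω Ω) = P.tmul (x Ω) (y Ω) := by
    intro x y
    have h1 : (U * P.map 1 y * star U) (P.tmul Ω Ω) = P.tmul Ω (y Ω) := by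
      show U (P.map 1 y (star U (P.tmul Ω Ω))) = _
      rw [hsUΦ, P.map_tmul, ContinuousLinearMap.one_apply, hUfixL]
    show P.map x 1 ((U * P.map 1 y * star U) (P.tmul Ω Ω)) = _
    rw [h1, P.map_tmul]
    rfl
  have hval₂ : ∀ (x y : H →L[ℂ] H),
      (P.map 1 y * (U * P.map x 1 * star U)) (P.tmul Ω Ω) = P.tmul (x Ω) (y Ω) := by
    intro x y
    have h1 : (U * P.map x 1 * star U) (P.tmul Ω Ω) = P.tmul (x Ω) Ω := by
      show U (P.map x 1 (star U (P.tmul Ω Ω))) = _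
      rw [hsUΦ, P.map_tmul, ContinuousLinearMap.one_apply, hUfixR]
    show P.map 1 y ((U * P.map x 1 * star U) (P.tmul Ω Ω)) = _
    rw [h1, P.map_tmul]
    rfl
  refine ⟨hcomm1, ?_, ?_⟩
  · -- cyclicity
    refine hd₁.mono ?_
    intro v hv
    refine Submodule.span_induction ?_ ?_ ?_ ?_ hv
    · rintro _ ⟨x, hx, y, hy, rfl⟩
      refine ⟨P.map x 1 * (U * P.map 1 y * star U), ?_, hval₁ x y⟩
      exact Set.mul_mem_centralizer
        (Set.subset_centralizer_centralizer (Or.inl ⟨x, hx, rfl⟩))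
        (Set.subset_centralizer_centralizer (Or.inr ⟨y, hy, rfl⟩))
    · exact ⟨0, Set.zero_mem_centralizer, by simp⟩
    · rintro a b _ _ ⟨za, hza, hva⟩ ⟨zb, hzb, hvb⟩
      exact ⟨za + zb, Set.add_mem_centralizer hza hzb, by
        simp only [ContinuousLinearMap.add_apply]
        rw [show za (P.tmul Ω Ω) = a from hva, show zb (P.tmul Ω Ω) = b from hvb]⟩
    · rintro c a _ ⟨za, hza, hva⟩
      exact ⟨c • za, Set.smul_mem_centralizer c hza, by
        simp only [ContinuousLinearMap.smul_apply]
        rw [show za (P.tmul Ω Ω) = a from hva]⟩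
  · -- separating
    intro z hz hzΦ
    have hvan : ∀ v ∈ Submodule.span ℂ {z : HT | ∃ x ∈ (Mp : Set (H →L[ℂ] H)),
        ∃ y ∈ (Mm : Set (H →L[ℂ] H)), z = P.tmul (x Ω) (y Ω)}, z v = 0 := by
      intro v hv
      refine Submodule.span_induction ?_ ?_ ?_ ?_ hv
      · rintro _ ⟨x, hx, y, hy, rfl⟩
        have hw : (P.map 1 y * (U * P.map x 1 * star U)) ∈
            genVN ((fun x : H →L[ℂ] H => U * P.map x 1 * star U) ''
              (Mp : Set (H →L[ℂ] H)) ∪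
              (fun y : H →L[ℂ] H => P.map 1 y) '' (Mm : Set (H →L[ℂ] H))) :=
          Set.mul_mem_centralizer
            (Set.subset_centralizer_centralizer (Or.inr ⟨y, hy, rfl⟩))
            (Set.subset_centralizer_centralizer (Or.inl ⟨x, hx, rfl⟩))
        have hc := hcomm1 z hz _ hw
        calc z (P.tmul (x Ω) (y Ω))
            = (z * (P.map 1 y * (U * P.map x 1 * star U))) (P.tmul Ω Ω) := by
              rw [← hval₂ x y]; rfl
          _ = ((P.map 1 y * (U * P.map x 1 * star U)) * z) (P.tmul Ω Ω) := by rw [hc]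
          _ = (P.map 1 y * (U * P.map x 1 * star U)) (z (P.tmul Ω Ω)) := rfl
          _ = 0 := by rw [hzΦ, map_zero]
      · exact map_zero z
      · intro a b _ _ ha hb
        rw [map_add, ha, hb, add_zero]
      · intro c a _ ha
        rw [map_smul, ha, smul_zero]
    have hclosed : IsClosed {v : HT | z v = 0} :=
      isClosed_eq z.continuous continuous_const
    have hsub : (↑(Submodule.span ℂ {z : HT | ∃ x ∈ (Mp : Set (H →L[ℂ] H)),
        ∃ y ∈ (Mm : Set (H →L[ℂ] H)), z = P.tmul (x Ω) (y Ω)}) : Set HT)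
        ⊆ {v : HT | z v = 0} := fun v hv => hvan v hv
    have hclos := closure_minimal hsub hclosed
    rw [hd₂.closure_eq] at hclos
    exact ContinuousLinearMap.ext fun v => hclos (Set.mem_univ v)
end
end
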